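/- arXiv:0810.4015 — 6 statements merged into one kernel-verified Lean document; each statement's English description precedes it below -/
import Mathlib

section
/- Let l < k with gcd(l,k) = d, k = n d, n > 1, and a in GF(2^k)*. Then P_a(x)=x^{2^l+1}+x+a has exactly one zero in GF(2^k) if and only if Z_n(a) = 0 and C_n(a) != 0; moreover in this case the unique zero equals (a C_n(a)^{2^l-1})^{2^{k-1}}. -/
/-- The sequence `C_1 = C_2 = 1`, `C_{i+2}(x) = C_{i+1}(x) + x^(2^(i*l)) * C_i(x)`
(with `C_0 = 0`), evaluated at `u`. -/
def Cseq (l : ℕ) {F : Type*} [Field F] (u : F) : ℕ → F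
  | 0 => 0
  | 1 => 1
  | 2 => 1
  | (i + 3) => Cseq l u (i + 2) + u ^ (2 ^ ((i + 1) * l)) * Cseq l u (i + 1)

/-- `Z_n(x) = C_{n+1}(x) + x * C_{n-1}(x)^(2^l)`, evaluated at `u`. -/
def Zseq (l n : ℕ) {F : Type*} [Field F] (u : F) : F :=
  Cseq l u (n + 1) + u * (Cseq l u (n - 1)) ^ (2 ^ l)

set_option linter.unusedSectionVars false
set_option linter.unusedVariables false

namespace S13

variable {F : Type*} [Field F] [CharP F 2]

lemma two0 : (2 : F) = 0 := by
  have := CharP.cast_eq_zero F 2; exact_mod_cast this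

lemma addpow (m : ℕ) (x y : F) : (x + y) ^ (2^m) = x ^ (2^m) + y ^ (2^m) :=
  add_pow_char_pow ..

lemma addpow' {l : ℕ} (i : ℕ) (x y : F) : (x + y) ^ ((2^l)^i) = x ^ ((2^l)^i) + y ^ ((2^l)^i) := by
  rw [← pow_mul 2 l i]
  exact addpow (l*i) x y

lemma sumpow {l : ℕ} {ι : Type*} (s : Finset ι) (f : ι → F) :
    (∑ i ∈ s, f i)^(2^l) = ∑ i ∈ s, (f i)^(2^l) := by
  simp only [← iterateFrobenius_def (R := F) (p := 2) (n := l)]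
  exact map_sum _ _ _

lemma sq_add (x y : F) : (x + y)^2 = x^2 + y^2 := by
  have := addpow 1 x y; norm_num at this; exact this

lemma sq_inj {x y : F} (h : x^2 = y^2) : x = y := by
  have h2 : (x + y)^2 = 0 := by
    rw [sq_add, h, ← two_mul, two0, zero_mul]
  have h3 : x + y = 0 := pow_eq_zero_iff (n := 2) (by norm_num) |>.mp h2
  have h4 : -y = x := neg_eq_of_add_eq_zero_left h3
  rw [← h4, CharTwo.neg_eq]

-- C sequence basics
variable (l : ℕ) (a : F)

@[simp] lemma C0 : Cseq l a 0 = 0 := rfl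
@[simp] lemma C1 : Cseq l a 1 = 1 := rfl
@[simp] lemma C2 : Cseq l a 2 = 1 := rfl

lemma recC : ∀ m, Cseq l a (m+2) = Cseq l a (m+1) + a ^ ((2^l) ^ m) * Cseq l a m
  | 0 => by simp
  | (m+1) => by
      show Cseq l a (m+3) = _
      rw [Cseq]
      congr 2
      rw [← pow_mul, Nat.mul_comm]



lemma ppow (y : F) (i j : ℕ) : (y ^ ((2^l)^i)) ^ ((2^l)^j) = y ^ ((2^l)^(i+j)) := by
  rw [← pow_mul, ← pow_add]

lemma pp1 (y : F) (i : ℕ) : (y ^ ((2^l)^i)) ^ (2^l) = y ^ ((2^l)^(i+1)) := by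
  have := ppow l y i 1
  rwa [pow_one] at this

lemma pp1' (y : F) (i : ℕ) : (y ^ (2^l)) ^ ((2^l)^i) = y ^ ((2^l)^(i+1)) := by
  have := ppow l y 1 i
  rw [pow_one] at this
  rwa [Nat.add_comm 1 i] at this

/-- `e m = 1 + Q + ... + Q^(m-1)` -/
def ee (l m : ℕ) : ℕ := ∑ i ∈ Finset.range m, (2^l)^i

@[simp] lemma ee0 : ee l 0 = 0 := rfl

lemma ee_succ (m : ℕ) : ee l (m+1) = 1 + 2^l * ee l m := by
  unfold ee
  rw [Finset.sum_range_succ']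
  rw [Finset.sum_congr rfl (fun i _ => pow_succ' (2^l) i), ← Finset.mul_sum, pow_zero, add_comm]

lemma ee_succ' (m : ℕ) : ee l (m+1) = ee l m + (2^l)^m := Finset.sum_range_succ _ _

lemma epow (m : ℕ) : a ^ (ee l (m+1)) = a * (a ^ (ee l m)) ^ (2^l) := by
  rw [ee_succ, pow_add, pow_one, ← pow_mul, Nat.mul_comm]

/-- the Frobenius-square identity `C_{m+2} = C_{m+1}^Q + a^Q C_m^{Q*Q}` -/
lemma idG : ∀ m, Cseq l a (m+2) = (Cseq l a (m+1)) ^ (2^l) + a ^ (2^l) * ((Cseq l a m) ^ (2^l)) ^ (2^l)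
  | 0 => by simp [zero_pow (pow_ne_zero l (two_ne_zero))]
  | 1 => by
      have h : Cseq l a 3 = Cseq l a 2 + a ^ ((2^l)^1) * Cseq l a 1 := recC l a 1
      rw [pow_one] at h
      rw [h]; simp
  | (m+2) => by
      have h1 : Cseq l a (m+4) = Cseq l a (m+3) + a ^ ((2^l)^(m+2)) * Cseq l a (m+2) := recC l a (m+2)
      have h2 : Cseq l a (m+3) = Cseq l a (m+2) + a ^ ((2^l)^(m+1)) * Cseq l a (m+1) := recC l a (m+1)
      have h3 : Cseq l a (m+2) = Cseq l a (m+1) + a ^ ((2^l)^m) * Cseq l a m := recC l a m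
      have ihm := idG m
      have ihm1 : Cseq l a (m+3) = (Cseq l a (m+2)) ^ (2^l) + a ^ (2^l) * ((Cseq l a (m+1)) ^ (2^l)) ^ (2^l) := idG (m+1)
      have e2 : (Cseq l a (m+3)) ^ (2^l) = (Cseq l a (m+2)) ^ (2^l) + a ^ ((2^l)^(m+2)) * (Cseq l a (m+1)) ^ (2^l) := by
        rw [h2, addpow, mul_pow, pp1]
      have e3 : ((Cseq l a (m+2)) ^ (2^l)) ^ (2^l)
          = ((Cseq l a (m+1)) ^ (2^l)) ^ (2^l) + a ^ ((2^l)^(m+2)) * ((Cseq l a m) ^ (2^l)) ^ (2^l) := by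
        rw [h3, addpow, mul_pow, addpow, mul_pow, pp1, pp1]
      linear_combination h1 + ihm1 + (a ^ ((2^l)^(m+2))) * ihm - e2 - a^(2^l) * e3

/-- determinant identity -/
lemma detC : ∀ m, a * (Cseq l a (m+2) * (Cseq l a m) ^ (2^l) + (Cseq l a (m+1)) ^ (2^l) * Cseq l a (m+1)) = a ^ (ee l (m+1))
  | 0 => by simp [zero_pow (pow_ne_zero l (two_ne_zero)), ee]
  | (m+1) => by
      show a * (Cseq l a (m+3) * (Cseq l a (m+1)) ^ (2^l) + (Cseq l a (m+2)) ^ (2^l) * Cseq l a (m+2)) = a ^ (ee l (m+2))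
      have ih := detC m
      have h1 : Cseq l a (m+3) = Cseq l a (m+2) + a ^ ((2^l)^(m+1)) * Cseq l a (m+1) := recC l a (m+1)
      have h2 : Cseq l a (m+2) = Cseq l a (m+1) + a ^ ((2^l)^m) * Cseq l a m := recC l a m
      have e2 : (Cseq l a (m+2)) ^ (2^l) = (Cseq l a (m+1)) ^ (2^l) + a ^ ((2^l)^(m+1)) * (Cseq l a m) ^ (2^l) := by
        rw [h2, addpow, mul_pow, pp1]
      have estep : a ^ (ee l (m+2)) = a ^ ((2^l)^(m+1)) * a ^ (ee l (m+1)) := by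
        rw [ee_succ' l (m+1), pow_add]; ring
      have htwo : (2:F) = 0 := two0
      rw [estep, ← ih]
      linear_combination (a * (Cseq l a (m+1))^(2^l)) * h1 + (a * Cseq l a (m+2)) * e2 + (a * Cseq l a (m+2) * (Cseq l a (m+1))^(2^l)) * htwo


/-! ### The N sequence attached to a root x -/

def Nx (l : ℕ) {F : Type*} [Field F] (a x : F) (i : ℕ) : F :=
  Cseq l a (i+1) * x + a * (Cseq l a i) ^ (2^l)

def Mx (l : ℕ) {F : Type*} [Field F] (x : F) (m : ℕ) : F :=
  ∏ j ∈ Finset.range m, x ^ ((2^l)^j)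

variable (x : F)

lemma Nx0 : Nx l a x 0 = x := by
  simp [Nx, zero_pow (pow_ne_zero l (two_ne_zero))]

lemma Nx1 : Nx l a x 1 = x + a := by simp [Nx]

lemma NxRec (i : ℕ) : Nx l a x (i+2) = Nx l a x (i+1) + a ^ ((2^l)^(i+1)) * Nx l a x i := by
  have h1 : Cseq l a (i+3) = Cseq l a (i+2) + a ^ ((2^l)^(i+1)) * Cseq l a (i+1) := recC l a (i+1)
  have e2 : (Cseq l a (i+2)) ^ (2^l) = (Cseq l a (i+1)) ^ (2^l) + a ^ ((2^l)^(i+1)) * (Cseq l a i) ^ (2^l) := by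
    rw [recC l a i, addpow, mul_pow, pp1]
  unfold Nx
  linear_combination x * h1 + a * e2

variable {l a x}

lemma hxmul (hx : x^(2^l) * x + x + a = 0) : x^(2^l) * x = x + a := by
  linear_combination hx - (x + a) * (two0 (F := F))

lemma hxconj (hx : x^(2^l) * x + x + a = 0) (i : ℕ) :
    x^((2^l)^(i+1)) * x^((2^l)^i) = x^((2^l)^i) + a^((2^l)^i) := by
  have h0 := hxmul hx
  have h := congrArg (fun y : F => y ^ ((2^l)^i)) h0
  rwa [mul_pow, pp1', addpow'] at h

lemma Nstep (hx : x^(2^l) * x + x + a = 0) : ∀ i, x^((2^l)^(i+1)) * Nx l a x i = Nx l a x (i+1)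
  | 0 => by
      rw [Nx0, Nx1, pow_one]
      have := hxconj hx 0
      simpa [pow_one] using this
  | (i+1) => by
      have ih := Nstep hx i
      have hc := hxconj hx (i+1)
      have hrec := NxRec l a x i
      calc x^((2^l)^(i+2)) * Nx l a x (i+1)
          = (x^((2^l)^(i+2)) * x^((2^l)^(i+1))) * Nx l a x i := by rw [← ih]; ring
        _ = (x^((2^l)^(i+1)) + a^((2^l)^(i+1))) * Nx l a x i := by rw [hc]
        _ = Nx l a x (i+1) + a^((2^l)^(i+1)) * Nx l a x i := by rw [← ih]; ring
        _ = Nx l a x (i+2) := (NxRec l a x i).symm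

lemma xne (ha : a ≠ 0) (hx : x^(2^l) * x + x + a = 0) : x ≠ 0 := by
  intro h
  rw [h] at hx
  simp at hx
  exact ha hx

lemma Nne (ha : a ≠ 0) (hx : x^(2^l) * x + x + a = 0) : ∀ i, Nx l a x i ≠ 0
  | 0 => by rw [Nx0]; exact xne ha hx
  | (i+1) => by
      rw [← Nstep hx i]
      exact mul_ne_zero (pow_ne_zero _ (xne ha hx)) (Nne ha hx i)

lemma Mx0 : Mx l x 0 = 1 := Finset.prod_range_zero _

lemma Mx_succ (m : ℕ) : Mx l x (m+1) = Mx l x m * x ^ ((2^l)^m) := Finset.prod_range_succ _ _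

lemma Mne (hx0 : x ≠ 0) (m : ℕ) : Mx l x m ≠ 0 :=
  Finset.prod_ne_zero_iff.mpr (fun i _ => pow_ne_zero _ hx0)

lemma MxQ (m : ℕ) : x * (Mx l x m)^(2^l) = Mx l x (m+1) := by
  unfold Mx
  rw [← Finset.prod_pow]
  rw [Finset.prod_congr rfl (fun j _ => pp1 l x j), Finset.prod_range_succ']
  rw [pow_zero, pow_one]
  ring

lemma MN (hx : x^(2^l) * x + x + a = 0) : ∀ m, Mx l x (m+1) = Nx l a x m
  | 0 => by rw [Mx_succ, Mx0, pow_zero, pow_one, one_mul, Nx0]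
  | (m+1) => by
      rw [Mx_succ, MN hx m, mul_comm]
      exact Nstep hx (m)

lemma detN (hx : x^(2^l) * x + x + a = 0) (j : ℕ) :
    Cseq l a (j+1) * Nx l a x (j+1) + Cseq l a (j+2) * Nx l a x j = a ^ (ee l (j+1)) := by
  have hd := detC l a j
  have htwo : (2:F) = 0 := two0
  unfold Nx
  linear_combination hd + (Cseq l a (j+1) * Cseq l a (j+2) * x) * htwo


/-! ### lemmas at level n = ν+2 -/

lemma Zdef (ν : ℕ) : Zseq l (ν+2) a = Cseq l a (ν+3) + a * (Cseq l a (ν+1)) ^ (2^l) := rfl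

lemma quad {ν : ℕ} (hx : x^(2^l) * x + x + a = 0) (hxQ : x^((2^l)^(ν+2)) = x) :
    Cseq l a (ν+2) * (x*x) + Zseq l (ν+2) a * x + a * (Cseq l a (ν+2))^(2^l) = 0 := by
  have h := Nstep hx (ν+1)
  rw [hxQ] at h
  unfold Nx at h
  rw [Zdef]
  have htwo : (2:F) = 0 := two0
  linear_combination h + (Cseq l a (ν+3) * x + a * (Cseq l a (ν+2))^(2^l)) * htwo

lemma id3 {ν : ℕ} (hA : a^((2^l)^(ν+2)) = a) :
    a^(2^l) * ((Cseq l a (ν+2))^(2^l))^(2^l)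
      = Zseq l (ν+2) a + a * Cseq l a (ν+2) + (Cseq l a (ν+2))^(2^l) := by
  have gG : Cseq l a (ν+4) = (Cseq l a (ν+3))^(2^l) + a^(2^l) * ((Cseq l a (ν+2))^(2^l))^(2^l) := idG l a (ν+2)
  have r1 : Cseq l a (ν+4) = Cseq l a (ν+3) + a^((2^l)^(ν+2)) * Cseq l a (ν+2) := recC l a (ν+2)
  rw [hA] at r1
  have e2 : (Cseq l a (ν+3))^(2^l) = (Cseq l a (ν+2))^(2^l) + a^((2^l)^(ν+2)) * (Cseq l a (ν+1))^(2^l) := by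
    rw [recC l a (ν+1), addpow, mul_pow, pp1]
  rw [hA] at e2
  rw [Zdef]
  have htwo : (2:F) = 0 := two0
  linear_combination -gG + r1 - e2 - (a * (Cseq l a (ν+1))^(2^l) + (Cseq l a (ν+2))^(2^l)) * htwo

lemma key_s {ν : ℕ} (hA : a^((2^l)^(ν+2)) = a) (hZ : Zseq l (ν+2) a = 0)
    (hC : Cseq l a (ν+2) ≠ 0) {s : F}
    (hs : s * Cseq l a (ν+2) = a * (Cseq l a (ν+2))^(2^l)) :
    s^(2^l) * s + s + a * a = 0 := by
  have f3 := id3 (a := a) hA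
  have hsQ : s^(2^l) * (Cseq l a (ν+2))^(2^l) = a^(2^l) * ((Cseq l a (ν+2))^(2^l))^(2^l) := by
    rw [← mul_pow, hs, mul_pow]
  have htwo : (2:F) = 0 := two0
  have h2 : (s^(2^l)*s + s + a*a) * ((Cseq l a (ν+2))^(2^l) * Cseq l a (ν+2)) = 0 := by
    linear_combination (s * Cseq l a (ν+2)) * hsQ
      + (a^(2^l) * ((Cseq l a (ν+2))^(2^l))^(2^l) + (Cseq l a (ν+2))^(2^l)) * hs
      - (a * (Cseq l a (ν+2))^(2^l)) * f3 + (a * (Cseq l a (ν+2))^(2^l)) * hZ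
      + (a * a^(2^l) * (Cseq l a (ν+2))^(2^l) * ((Cseq l a (ν+2))^(2^l))^(2^l)) * htwo
      - (a * (Cseq l a (ν+2))^(2^l) * Zseq l (ν+2) a) * htwo
  rcases mul_eq_zero.mp h2 with h | h
  · exact h
  · exact absurd h (mul_ne_zero (pow_ne_zero _ hC) hC)

lemma exist_root {ν : ℕ} (hA : a^((2^l)^(ν+2)) = a) (hZ : Zseq l (ν+2) a = 0)
    (hC : Cseq l a (ν+2) ≠ 0) {s x0 : F}
    (hs : s * Cseq l a (ν+2) = a * (Cseq l a (ν+2))^(2^l))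
    (hx02 : x0 * x0 = s) :
    x0^(2^l) * x0 + x0 + a = 0 := by
  have key := key_s hA hZ hC hs
  have hQ0 : x0^(2^l) * x0^(2^l) = s^(2^l) := by rw [← mul_pow, hx02]
  have htwo : (2:F) = 0 := two0
  have sq0 : (x0^(2^l)*x0 + x0 + a) * (x0^(2^l)*x0 + x0 + a) = s^(2^l)*s + s + a*a := by
    linear_combination (x0*x0) * hQ0 + (s^(2^l)) * hx02 + hx02
      + (x0^(2^l)*x0*x0 + x0^(2^l)*x0*a + x0*a) * htwo
  have : (x0^(2^l)*x0 + x0 + a) * (x0^(2^l)*x0 + x0 + a) = 0 := by rw [sq0, key]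
  exact mul_self_eq_zero.mp this

lemma uniq_root {ν : ℕ} (hx : x^(2^l) * x + x + a = 0) (hxQ : x^((2^l)^(ν+2)) = x)
    (hZ : Zseq l (ν+2) a = 0) (hC : Cseq l a (ν+2) ≠ 0) {s x0 : F}
    (hs : s * Cseq l a (ν+2) = a * (Cseq l a (ν+2))^(2^l))
    (hx02 : x0 * x0 = s) : x = x0 := by
  have hq := quad hx hxQ
  rw [hZ, zero_mul, add_zero] at hq
  have hxx : (x*x) * Cseq l a (ν+2) = s * Cseq l a (ν+2) := by
    rw [hs]; linear_combination hq - (a * (Cseq l a (ν+2))^(2^l)) * (two0 (F := F))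
  have hxs : x * x = s := mul_right_cancel₀ hC hxx
  have : x^2 = x0^2 := by rw [pow_two, pow_two, hxs, hx02]
  exact sq_inj this

lemma second_root_L1 {ν : ℕ} (ha : a ≠ 0) (hx : x^(2^l) * x + x + a = 0)
    (hxQ : x^((2^l)^(ν+2)) = x) (hA : a^((2^l)^(ν+2)) = a)
    (hC : Cseq l a (ν+2) ≠ 0) (hZ : Zseq l (ν+2) a ≠ 0) :
    ∃ y : F, y ≠ x ∧ y^(2^l) * y + y + a = 0 := by
  have hx0 : x ≠ 0 := xne ha hx
  have htwo : (2:F) = 0 := two0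
  have f3 := id3 (a := a) (ν := ν) hA
  have f5 := quad hx hxQ
  set C := Cseq l a (ν+2) with hCdef
  set Z := Zseq l (ν+2) a with hZdef
  have hD : C * x ≠ 0 := mul_ne_zero hC hx0
  refine ⟨(a * C^(2^l)) * (C * x)⁻¹, ?_, ?_⟩
  · intro hyx
    have hE : a * C^(2^l) = x * (C * x) := by
      field_simp at hyx
      linear_combination hyx
    have hZx : Z * x = 0 := by
      linear_combination f5 - hE - (C*x*x) * htwo
    rcases mul_eq_zero.mp hZx with h | h
    · exact hZ h
    · exact hx0 h
  · have hB : (a^(2^l) * (C^(2^l))^(2^l) + C^(2^l) * x^(2^l) + C * x + a * C) * x = 0 := by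
      linear_combination x * f3 + (C^(2^l)) * hx + f5 + (a*C*x - a*C^(2^l)) * htwo
    have hB0 : a^(2^l) * (C^(2^l))^(2^l) + C^(2^l) * x^(2^l) + C * x + a * C = 0 := by
      rcases mul_eq_zero.mp hB with h | h
      · exact h
      · exact absurd h hx0
    have hCQx : (C*x)^(2^l) ≠ 0 := pow_ne_zero _ hD
    field_simp
    rw [div_pow, mul_pow, mul_pow]
    field_simp
    linear_combination a * hB0 + (a*C) * hx - (a*C*(x+a)) * htwo


/-! ### the hard case: C_n = 0 -/

lemma Z0_of_C0 {ν : ℕ} (ha : a ≠ 0) (hx : x^(2^l) * x + x + a = 0)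
    (hxQ : x^((2^l)^(ν+2)) = x) (hC0 : Cseq l a (ν+2) = 0) : Zseq l (ν+2) a = 0 := by
  have hq := quad hx hxQ
  rw [hC0, zero_mul, zero_add, zero_pow (pow_ne_zero l (two_ne_zero)), mul_zero, add_zero] at hq
  rcases mul_eq_zero.mp hq with h | h
  · exact h
  · exact absurd h (xne ha hx)

lemma normN {ν : ℕ} (ha : a ≠ 0) (hx : x^(2^l) * x + x + a = 0)
    (hxQ : x^((2^l)^(ν+2)) = x) (hC0 : Cseq l a (ν+2) = 0) :
    Nx l a x (ν+1) * Nx l a x (ν+1) = a^(ee l (ν+2)) := by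
  have hd := detN hx (ν+1)
  rw [hC0, zero_mul, zero_add] at hd
  have hd' : Cseq l a (ν+3) * Nx l a x (ν+1) = a^(ee l (ν+2)) := hd
  have hZ0 := Z0_of_C0 ha hx hxQ hC0
  rw [Zdef] at hZ0
  have h3 : Cseq l a (ν+3) = a * (Cseq l a (ν+1))^(2^l) := by
    linear_combination hZ0 - (a * (Cseq l a (ν+1))^(2^l)) * (two0 (F := F))
  have hN : Nx l a x (ν+1) = a * (Cseq l a (ν+1))^(2^l) := by
    unfold Nx; rw [hC0, zero_mul, zero_add]
  rw [← hd', hN, h3]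

def piF (l : ℕ) {F : Type*} [Field F] (a x : F) (i : ℕ) : F :=
  (Mx l x i * Mx l x i) * (a ^ (ee l i))⁻¹

lemma piF0 : piF l a x 0 = 1 := by simp [piF, Mx0]

lemma piF_ne (ha : a ≠ 0) (hx0 : x ≠ 0) (i : ℕ) : piF l a x i ≠ 0 := by
  unfold piF
  exact mul_ne_zero (mul_ne_zero (Mne hx0 i) (Mne hx0 i)) (inv_ne_zero (pow_ne_zero _ ha))

lemma piFQ (ha : a ≠ 0) (i : ℕ) :
    (piF l a x i)^(2^l) * (x*x) = piF l a x (i+1) * a := by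
  have hane : (a ^ (ee l i))^(2^l) ≠ 0 := pow_ne_zero _ (pow_ne_zero _ ha)
  have hM := MxQ (l := l) (x := x) i
  unfold piF
  rw [mul_pow, mul_pow, inv_pow, epow]
  field_simp
  linear_combination (x * (Mx l x i)^(2^l) + Mx l x (i+1)) * hM

def lam (l ν : ℕ) {F : Type*} [Field F] (a x c : F) : F :=
  ∑ i ∈ Finset.range (ν+2), piF l a x i * c^((2^l)^i)

lemma lamQ {ν : ℕ} (ha : a ≠ 0) (hx : x^(2^l) * x + x + a = 0)
    (hxQ : x^((2^l)^(ν+2)) = x) (hC0 : Cseq l a (ν+2) = 0)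
    (huniv : ∀ y : F, y^((2^l)^(ν+2)) = y) (c : F) :
    (lam l ν a x c)^(2^l) * (x*x) = lam l ν a x c * a := by
  have hx0 : x ≠ 0 := xne ha hx
  unfold lam
  rw [sumpow]
  rw [Finset.sum_mul, Finset.sum_mul]
  have step : ∀ i ∈ Finset.range (ν+2),
      (piF l a x i * c^((2^l)^i))^(2^l) * (x*x) = (piF l a x (i+1) * c^((2^l)^(i+1))) * a := by
    intro i _
    rw [mul_pow, pp1]
    have := piFQ (l := l) (a := a) (x := x) ha i
    linear_combination (c^((2^l)^(i+1))) * this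
  rw [Finset.sum_congr rfl step]
  -- now reindex
  have hshift : ∑ i ∈ Finset.range (ν+2), piF l a x (i+1) * c^((2^l)^(i+1)) * a
      = (∑ i ∈ Finset.range (ν+3), piF l a x i * c^((2^l)^i) * a) - piF l a x 0 * c^((2^l)^0) * a := by
    rw [Finset.sum_range_succ' (fun i => piF l a x i * c^((2^l)^i) * a) (ν+2)]
    ring
  rw [hshift, Finset.sum_range_succ]
  have hpin : piF l a x (ν+2) = 1 := by
    have h1 : Mx l x (ν+2) = Nx l a x (ν+1) := MN hx (ν+1)
    have h2 := normN ha hx hxQ hC0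
    unfold piF
    rw [h1, h2]
    exact mul_inv_cancel₀ (pow_ne_zero _ ha)
  rw [hpin, piF0, huniv c, pow_zero, pow_one]
  ring

lemma gam_rel {ν : ℕ} {c : F} (hlam : lam l ν a x c ≠ 0)
    (ha : a ≠ 0) (hx : x^(2^l) * x + x + a = 0)
    (hxQ : x^((2^l)^(ν+2)) = x) (hC0 : Cseq l a (ν+2) = 0)
    (huniv : ∀ y : F, y^((2^l)^(ν+2)) = y) :
    ((lam l ν a x c)⁻¹)^(2^l) * a = (lam l ν a x c)⁻¹ * (x * x) := by
  have h := lamQ ha hx hxQ hC0 huniv c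
  have hQ : (lam l ν a x c)^(2^l) ≠ 0 := pow_ne_zero _ hlam
  rw [inv_pow]
  field_simp
  linear_combination h + (a * lam l ν a x c - (lam l ν a x c)^(2^l) * x^2) * (two0 (F := F))

/-- the power formula for γ -/
lemma gampow {γ : F} (hγ : γ^(2^l) * a = γ * (x*x)) :
    ∀ m, γ^((2^l)^m) * a^(ee l m) = γ * (Mx l x m * Mx l x m)
  | 0 => by simp [Mx0]
  | (m+1) => by
      have ih := gampow hγ m
      have e3 : (γ^((2^l)^m))^(2^l) * ((a^(ee l m)))^(2^l)
          = γ^(2^l) * ((Mx l x m)^(2^l) * (Mx l x m)^(2^l)) := by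
        have := congrArg (fun y : F => y^(2^l)) ih
        simp only [mul_pow] at this
        exact this
      have hM := MxQ (l := l) (x := x) m
      rw [← pp1 l γ m, epow l a m]
      linear_combination a * e3 + ((Mx l x m)^(2^l) * (Mx l x m)^(2^l)) * hγ
        + (γ * x * (Mx l x m)^(2^l) + γ * Mx l x (m+1)) * hM

lemma zpowl {γ : F} (hγ : γ^(2^l) * a = γ * (x*x)) (hx0 : x ≠ 0) (hγ0 : γ ≠ 0) (m : ℕ) :
    ((x*γ)⁻¹)^((2^l)^m) * (γ * (Mx l x m * Mx l x (m+1))) = a^(ee l m) := by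
  have h2 : ((x*γ)⁻¹)^((2^l)^m) * (x^((2^l)^m) * γ^((2^l)^m)) = 1 := by
    rw [← mul_pow, ← mul_pow, inv_mul_cancel₀ (mul_ne_zero hx0 hγ0), one_pow]
  have hg := gampow hγ m
  rw [Mx_succ]
  linear_combination (a^(ee l m)) * h2 - (((x*γ)⁻¹)^((2^l)^m) * x^((2^l)^m)) * hg

lemma psC {γ : F} (hγ : γ^(2^l) * a = γ * (x*x)) (ha : a ≠ 0)
    (hx : x^(2^l) * x + x + a = 0) (hγ0 : γ ≠ 0) :
    ∀ m, (∑ i ∈ Finset.range m, ((x*γ)⁻¹)^((2^l)^i)) * (γ * Mx l x m) = Cseq l a m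
  | 0 => by simp
  | 1 => by
      have hx0 : x ≠ 0 := xne ha hx
      rw [Finset.sum_range_one, pow_zero, pow_one]
      have : Mx l x 1 = x := by rw [Mx_succ, Mx0, pow_zero, pow_one, one_mul]
      rw [this, C1]
      field_simp
  | (j+2) => by
      have hx0 : x ≠ 0 := xne ha hx
      have ihp := psC hγ ha hx hγ0 (j+1)
      have zp := zpowl hγ hx0 hγ0 (j+1)
      have dn := detN hx j
      have hN1 : Nx l a x (j+1) = Mx l x (j+2) := (MN hx (j+1)).symm
      have hN0 : Nx l a x j = Mx l x (j+1) := (MN hx j).symm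
      rw [hN1, hN0] at dn
      have hMne : Mx l x (j+1) ≠ 0 := Mne hx0 (j+1)
      have htwo : (2:F) = 0 := two0
      apply mul_right_cancel₀ hMne
      rw [Finset.sum_range_succ]
      linear_combination (Mx l x (j+2)) * ihp + zp + dn
        + (- Cseq l a (j+2) * Mx l x (j+1) + a^(ee l (j+1))) * htwo


lemma psQ {z : F} (m : ℕ) :
    (∑ i ∈ Finset.range m, z^((2^l)^i))^(2^l) + z = ∑ i ∈ Finset.range (m+1), z^((2^l)^i) := by
  rw [sumpow, Finset.sum_range_succ' (fun i => z^((2^l)^i)) m, pow_zero, pow_one]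
  congr 1
  exact Finset.sum_congr rfl (fun i _ => pp1 l z i)

/-- construction of v with v^Q + v = z -/
lemma v_exists {ν : ℕ} {z θ : F}
    (huniv : ∀ y : F, y^((2^l)^(ν+2)) = y)
    (hTRz : ∑ i ∈ Finset.range (ν+2), z^((2^l)^i) = 0)
    (hθ : ∑ i ∈ Finset.range (ν+2), θ^((2^l)^i) = 1) :
    ∃ v : F, v^(2^l) + v = z := by
  set PS : ℕ → F := fun m => ∑ i ∈ Finset.range m, z^((2^l)^i) with hPS
  refine ⟨∑ i ∈ Finset.range (ν+2), PS (i+1) * θ^((2^l)^i), ?_⟩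
  have htwo : (2:F) = 0 := two0
  have hvQ : (∑ i ∈ Finset.range (ν+2), PS (i+1) * θ^((2^l)^i))^(2^l)
      = ∑ i ∈ Finset.range (ν+2), (PS (i+2) + z) * θ^((2^l)^(i+1)) := by
    rw [sumpow]
    refine Finset.sum_congr rfl (fun i _ => ?_)
    rw [mul_pow, pp1]
    congr 1
    have := psQ (l := l) (z := z) (i+1)
    linear_combination this - z * htwo
  rw [hvQ]
  have split : ∑ i ∈ Finset.range (ν+2), (PS (i+2) + z) * θ^((2^l)^(i+1))
      = (∑ i ∈ Finset.range (ν+2), PS (i+2) * θ^((2^l)^(i+1)))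
        + z * (∑ i ∈ Finset.range (ν+2), θ^((2^l)^(i+1))) := by
    rw [Finset.mul_sum, ← Finset.sum_add_distrib]
    exact Finset.sum_congr rfl (fun i _ => by ring)
  rw [split]
  have hθQ : ∑ i ∈ Finset.range (ν+2), θ^((2^l)^(i+1)) = 1 := by
    have h1 : (∑ i ∈ Finset.range (ν+2), θ^((2^l)^i))^(2^l) = 1 := by rw [hθ, one_pow]
    rw [sumpow] at h1
    rw [← h1]
    exact Finset.sum_congr rfl (fun i _ => (pp1 l θ i).symm)
  rw [hθQ, mul_one]
  -- shift the main sum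
  have hshift : ∑ i ∈ Finset.range (ν+2), PS (i+2) * θ^((2^l)^(i+1))
      = (∑ i ∈ Finset.range (ν+3), PS (i+1) * θ^((2^l)^i)) - PS 1 * θ^((2^l)^0) := by
    rw [Finset.sum_range_succ' (fun i => PS (i+1) * θ^((2^l)^i)) (ν+2)]
    ring
  have hPSn1 : PS (ν+3) = z := by
    have : PS (ν+3) = PS (ν+2) + z^((2^l)^(ν+2)) := Finset.sum_range_succ _ _
    rw [this, huniv z]
    have h0 : PS (ν+2) = 0 := hTRz
    rw [h0, zero_add]
  have hlast : ∑ i ∈ Finset.range (ν+3), PS (i+1) * θ^((2^l)^i)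
      = (∑ i ∈ Finset.range (ν+2), PS (i+1) * θ^((2^l)^i)) + PS (ν+3) * θ^((2^l)^(ν+2)) :=
    Finset.sum_range_succ _ _
  rw [hshift, hlast, hPSn1, huniv θ]
  have hPS1 : PS 1 = z := by rw [hPS]; simp
  rw [hPS1, pow_zero, pow_one]
  linear_combination (∑ i ∈ Finset.range (ν+2), PS (i+1) * θ^((2^l)^i)) * htwo

/-- the second root in the case C_n = 0 -/
lemma second_root_L2 {ν : ℕ} (ha : a ≠ 0) (hx : x^(2^l) * x + x + a = 0)
    (huniv : ∀ y : F, y^((2^l)^(ν+2)) = y) (hC0 : Cseq l a (ν+2) = 0)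
    (hcex : ∃ c : F, lam l ν a x c ≠ 0)
    (hθex : ∃ θ : F, ∑ i ∈ Finset.range (ν+2), θ^((2^l)^i) = 1) :
    ∃ y : F, y ≠ x ∧ y^(2^l) * y + y + a = 0 := by
  have hx0 : x ≠ 0 := xne ha hx
  have htwo : (2:F) = 0 := two0
  obtain ⟨θ, hθ⟩ := hθex
  obtain ⟨γ, hγ0, hγ⟩ : ∃ γ : F, γ ≠ 0 ∧ γ^(2^l) * a = γ * (x*x) := by
    obtain ⟨c, hlam⟩ := hcex
    exact ⟨(lam l ν a x c)⁻¹, inv_ne_zero hlam, gam_rel hlam ha hx (huniv x) hC0 huniv⟩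
  have hxγ : x * γ ≠ 0 := mul_ne_zero hx0 hγ0
  obtain ⟨z, hzz⟩ : ∃ z : F, x * γ * z = 1 := ⟨(x*γ)⁻¹, mul_inv_cancel₀ hxγ⟩
  have hinv : (x*γ)⁻¹ = z := inv_eq_of_mul_eq_one_right hzz
  have hTRz : ∑ i ∈ Finset.range (ν+2), z^((2^l)^i) = 0 := by
    have h1 := psC hγ ha hx hγ0 (ν+2)
    rw [hinv, hC0] at h1
    have hMne : γ * Mx l x (ν+2) ≠ 0 := mul_ne_zero hγ0 (Mne hx0 (ν+2))
    rcases mul_eq_zero.mp h1 with h | h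
    · exact h
    · exact absurd h hMne
  obtain ⟨v, hv⟩ := v_exists huniv hTRz hθ
  obtain ⟨s, hsdef⟩ : ∃ s : F, s = γ * v := ⟨_, rfl⟩
  have hseq : a * s^(2^l) + (x*x) * s + x = 0 := by
    rw [hsdef, mul_pow]
    linear_combination (v^(2^l)) * hγ + (x*x*γ) * hv + x * hzz + x * htwo
  have hs0 : s ≠ 0 := by
    intro h
    rw [h] at hseq
    simp [zero_pow (pow_ne_zero l (two_ne_zero))] at hseq
    exact hx0 hseq
  refine ⟨x + s⁻¹, ?_, ?_⟩
  · intro h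
    have h2 : s⁻¹ = 0 := by linear_combination h
    exact (inv_ne_zero hs0) h2
  · have hsQ : s^(2^l) ≠ 0 := pow_ne_zero _ hs0
    have hexp : (x + s⁻¹)^(2^l) = x^(2^l) + (s^(2^l))⁻¹ := by
      rw [addpow, inv_pow]
    rw [hexp]
    have e1 : (s^(2^l))⁻¹ * s^(2^l) = 1 := inv_mul_cancel₀ hsQ
    have e2 : s⁻¹ * s = 1 := inv_mul_cancel₀ hs0
    have hmain : ((x^(2^l) + (s^(2^l))⁻¹) * (x + s⁻¹) + (x + s⁻¹) + a) * (s^(2^l) * s * a) = 0 := by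
      linear_combination (a*s^(2^l)*s + x*s + 1) * hx + (x^(2^l)+1) * hseq
        + (a*x^(2^l)*s^(2^l)) * e2 + (a*x*s) * e1 + (a*(s⁻¹*s)) * e1 + a * e2 + (a*s^(2^l)) * e2
        - (x^(2^l)*x*x*s + x*x*s + x^(2^l)*x + x) * htwo
    rcases mul_eq_zero.mp hmain with h | h
    · exact h
    · exact absurd h (mul_ne_zero (mul_ne_zero hsQ hs0) ha)


/-! ### finite field input -/

lemma pow2one {m : ℕ} : (2:ℕ)^m = 1 ↔ m = 0 := by
  constructor
  · intro h
    by_contra hm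
    have := Nat.one_lt_two_pow_iff.mpr hm
    omega
  · rintro rfl; rfl

section Finite
variable [Fintype F]

lemma powcard {k : ℕ} (hF : Fintype.card F = 2^k) : ∀ (t : ℕ) (y : F), y^((2^k)^t) = y
  | 0, y => by simp
  | (t+1), y => by
      rw [pow_succ, pow_mul, powcard hF t y, ← hF]
      exact FiniteField.pow_card y

lemma powmulk {k : ℕ} (hF : Fintype.card F = 2^k) (t : ℕ) (y : F) : y^(2^(k*t)) = y := by
  rw [pow_mul]
  exact powcard hF t y

lemma powmod {k : ℕ} (hF : Fintype.card F = 2^k) (y : F) (m : ℕ) :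
    y^(2^m) = y^(2^(m % k)) := by
  conv_lhs => rw [← Nat.div_add_mod m k]
  rw [Nat.add_comm, pow_add, pow_mul]
  exact powmulk hF (m/k) _

lemma huniv_of {k t n : ℕ} (hF : Fintype.card F = 2^k) (hln : l * n = k * t) :
    ∀ y : F, y^((2^l)^n) = y := by
  intro y
  rw [← pow_mul, hln]
  exact powmulk hF t y

lemma pwexp {k d t n : ℕ} (hF : Fintype.card F = 2^k) (hk : k = n*d) (hl : l = d*t)
    (y : F) (i : ℕ) : y^((2^l)^i) = y^(2^(d*((t*i) % n))) := by
  rw [← pow_mul, powmod hF]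
  congr 1
  rw [hl, hk, Nat.mul_comm n d, Nat.mul_assoc, Nat.mul_mod_mul_left]

/-- key existence: a nonvanishing point of a sparse polynomial -/
lemma poly_exists {k d n : ℕ} (hF : Fintype.card F = 2^k) (hk : k = n*d) (hd0 : 0 < d)
    (hn0 : 0 < n) (g : ℕ → F) (τ : ℕ → ℕ) (hτlt : ∀ i, i < n → τ i < n)
    (hτ0 : ∀ i, i < n → (τ i = 0 ↔ i = 0)) (hg0 : g 0 = 1) :
    ∃ c : F, ∑ i ∈ Finset.range n, g i * c^(2^(d * τ i)) ≠ 0 := by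
  set p : Polynomial F := ∑ i ∈ Finset.range n, Polynomial.monomial (2^(d * τ i)) (g i) with hp
  have hp1 : p.coeff 1 = 1 := by
    rw [hp, Polynomial.finset_sum_coeff]
    rw [Finset.sum_eq_single_of_mem 0 (Finset.mem_range.mpr hn0)]
    · rw [Polynomial.coeff_monomial, if_pos, hg0]
      rw [(hτ0 0 hn0).mpr rfl, Nat.mul_zero, pow_zero]
    · intro i hi hne
      rw [Polynomial.coeff_monomial, if_neg]
      intro h
      have : d * τ i = 0 := pow2one.mp h
      have : τ i = 0 := by
        rcases Nat.mul_eq_zero.mp this with h' | h'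
        · omega
        · exact h'
      exact hne ((hτ0 i (Finset.mem_range.mp hi)).mp this)
  have hpne : p ≠ 0 := by
    intro h
    rw [h, Polynomial.coeff_zero] at hp1
    exact one_ne_zero hp1.symm
  have hdeg : p.natDegree < Fintype.card F := by
    have h1 : p.natDegree ≤ 2^(d * (n-1)) := by
      rw [hp]
      apply Polynomial.natDegree_sum_le_of_forall_le
      intro i hi
      refine le_trans (Polynomial.natDegree_monomial_le (g i)) ?_
      apply Nat.pow_le_pow_right (by norm_num)
      have h3 := hτlt i (Finset.mem_range.mp hi)
      exact Nat.mul_le_mul_left d (by omega)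
    have h2 : (2:ℕ)^(d * (n-1)) < 2^k := by
      apply Nat.pow_lt_pow_right (by norm_num)
      have e : d*(n-1) + d = k := by
        cases n with
        | zero => omega
        | succ m =>
            rw [hk]
            simp [Nat.add_sub_cancel]
            ring
      rw [← e]
      exact Nat.lt_add_of_pos_right hd0
    rw [hF]
    exact lt_of_le_of_lt h1 h2
  obtain ⟨c, hc⟩ := Polynomial.exists_eval_ne_zero_of_natDegree_lt_card p hpne
    (by rw [Cardinal.mk_fintype]; exact_mod_cast hdeg)
  refine ⟨c, ?_⟩
  have he : Polynomial.eval c p = ∑ i ∈ Finset.range n, g i * c^(2^(d * τ i)) := by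
    rw [hp, Polynomial.eval_finset_sum]
    exact Finset.sum_congr rfl (fun i _ => Polynomial.eval_monomial)
  rwa [he] at hc

lemma modinv {n t t' : ℕ} (h1 : (t*t') % n = 1) {i : ℕ} (hi : i < n) :
    (t' * ((t*i) % n)) % n = i := by
  have hn0 : 0 < n := lt_of_le_of_lt (Nat.zero_le i) hi
  have e1 : t' * ((t*i) % n) ≡ t' * (t*i) [MOD n] :=
    Nat.ModEq.mul_left t' (Nat.mod_modEq (t*i) n)
  have e2 : t' * (t*i) = (t*t') * i := by ring
  have e3 : (t*t') * i ≡ 1 * i [MOD n] := by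
    apply Nat.ModEq.mul_right i
    calc t*t' ≡ (t*t') % n [MOD n] := (Nat.mod_modEq _ n).symm
      _ = 1 := h1
  have : t' * ((t*i) % n) ≡ i [MOD n] := by
    calc t' * ((t*i) % n) ≡ t' * (t*i) [MOD n] := e1
      _ = (t*t') * i := e2
      _ ≡ 1 * i [MOD n] := e3
      _ = i := one_mul i
  calc (t' * ((t*i) % n)) % n = i % n := this
    _ = i := Nat.mod_eq_of_lt hi

lemma reindex_sum {M : Type*} [AddCommMonoid M] {n t t' : ℕ} (hn0 : 0 < n) (h1 : (t*t') % n = 1)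
    (f : ℕ → M) :
    ∑ i ∈ Finset.range n, f ((t*i) % n) = ∑ j ∈ Finset.range n, f j := by
  have h1' : (t'*t) % n = 1 := by rwa [Nat.mul_comm] at h1
  apply Finset.sum_bij' (i := fun i _ => (t*i) % n) (j := fun j _ => (t'*j) % n)
  · intro a ha
    exact Finset.mem_range.mpr (Nat.mod_lt _ hn0)
  · intro a ha
    exact Finset.mem_range.mpr (Nat.mod_lt _ hn0)
  · intro a ha
    exact modinv h1 (Finset.mem_range.mp ha)
  · intro a ha
    exact modinv h1' (Finset.mem_range.mp ha)
  · intro a ha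
    rfl

/-- existence of an element of trace 1 -/
lemma trace_one {k d t n : ℕ} (hF : Fintype.card F = 2^k) (hk : k = n*d) (hl : l = d*t)
    (hd0 : 0 < d) (hn : 1 < n) (hco : Nat.Coprime t n)
    (hu : ∀ y : F, y^((2^l)^n) = y) :
    ∃ θ : F, ∑ i ∈ Finset.range n, θ^((2^l)^i) = 1 := by
  obtain ⟨θ0, hθ0⟩ := poly_exists hF hk hd0 (by omega) (fun _ => (1:F)) (fun i => i)
    (fun i hi => hi) (fun i _ => Iff.rfl) rfl
  simp only [one_mul] at hθ0
  -- translate: T := ∑ θ0^{Q^i} equals the evaluated sum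
  set T : F := ∑ i ∈ Finset.range n, θ0^((2^l)^i) with hT
  have hTeq : T = ∑ j ∈ Finset.range n, θ0^(2^(d * j)) := by
    rw [hT]
    obtain ⟨t', -, ht'⟩ := Nat.exists_mul_mod_eq_one_of_coprime hco hn
    rw [Finset.sum_congr rfl (fun i _ => pwexp hF hk hl θ0 i)]
    exact reindex_sum (by omega) ht' (fun j => θ0^(2^(d*j)))
  have hTne : T ≠ 0 := by rw [hTeq]; exact hθ0
  have hTQ : T^(2^l) = T := by
    rw [hT, sumpow]
    rw [Finset.sum_congr rfl (fun i _ => pp1 l θ0 i)]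
    have hs := Finset.sum_range_succ' (fun i => θ0^((2^l)^i)) n
    have hs2 := Finset.sum_range_succ (fun i => θ0^((2^l)^i)) n
    -- ∑_{i<n} θ0^{Q^{i+1}} = (∑_{i<n+1}) - θ0^{Q^0} = (∑_{i<n} + θ0^{Q^n}) - θ0
    have : ∑ i ∈ Finset.range n, θ0^((2^l)^(i+1))
        = (∑ i ∈ Finset.range n, θ0^((2^l)^i)) + θ0^((2^l)^n) - θ0^((2^l)^0) := by
      rw [← hs2]
      rw [hs]
      ring
    rw [this, hu θ0, pow_zero, pow_one]
    ring
  have hTQi : ∀ i, T^((2^l)^i) = T := by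
    intro i
    induction i with
    | zero => simp
    | succ i ih => rw [← pp1, ih, hTQ]
  refine ⟨T⁻¹ * θ0, ?_⟩
  have : ∀ i ∈ Finset.range n, (T⁻¹ * θ0)^((2^l)^i) = T⁻¹ * θ0^((2^l)^i) := by
    intro i _
    rw [mul_pow, inv_pow, hTQi i]
  rw [Finset.sum_congr rfl this, ← Finset.mul_sum, ← hT]
  exact inv_mul_cancel₀ hTne

/-- existence of c with lam ≠ 0 -/
lemma lam_exists {k d t ν : ℕ} (hF : Fintype.card F = 2^k) (hk : k = (ν+2)*d)
    (hl : l = d*t) (hd0 : 0 < d) (hco : Nat.Coprime t (ν+2))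
    (ha : a ≠ 0) (hx0 : x ≠ 0) :
    ∃ c : F, lam l ν a x c ≠ 0 := by
  have hτ0 : ∀ i, i < ν+2 → ((t*i) % (ν+2) = 0 ↔ i = 0) := by
    intro i hi
    constructor
    · intro h
      have hdvd : (ν+2) ∣ t * i := Nat.dvd_of_mod_eq_zero h
      have h2 : (ν+2) ∣ i := (Nat.Coprime.symm hco).dvd_of_dvd_mul_left hdvd
      exact Nat.eq_zero_of_dvd_of_lt h2 hi
    · rintro rfl; simp
  obtain ⟨c, hc⟩ := poly_exists hF hk hd0 (by omega) (piF l a x)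
    (fun i => (t*i) % (ν+2)) (fun i _ => Nat.mod_lt _ (by omega)) hτ0 piF0
  refine ⟨c, ?_⟩
  have heq : lam l ν a x c = ∑ i ∈ Finset.range (ν+2), piF l a x i * c^(2^(d * ((t*i) % (ν+2)))) := by
    unfold lam
    exact Finset.sum_congr rfl (fun i _ => by rw [pwexp hF hk hl c i])
  rwa [heq]

end Finite
end S13

section CharTwoDer
variable {F : Type*} [Field F] [Fintype F]

lemma char_two_of_card {k : ℕ} (hk0 : 0 < k) (hF : Fintype.card F = 2^k) : CharP F 2 := by
  have h := ringChar.charP F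
  obtain ⟨m, hp, hcard⟩ := FiniteField.card F (ringChar F)
  rw [hF] at hcard
  have hdvd : ringChar F ∣ 2^k := by
    have h1 : ringChar F ∣ ringChar F ^ (m:ℕ) := dvd_pow_self _ (by exact_mod_cast m.ne_zero)
    rwa [← hcard] at h1
  have h2 : ringChar F = 2 :=
    (Nat.prime_dvd_prime_iff_eq hp Nat.prime_two).mp (hp.dvd_of_dvd_pow hdvd)
  rw [← h2]
  exact h

end CharTwoDer

/-- `P_a` has exactly one zero in `GF(2^k)` iff `Z_n(a) = 0` and
`C_n(a) ≠ 0`; in this case the unique zero equals `(a C_n(a)^(2^l-1))^(2^(k-1))`. -/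
theorem stmt_13 (k l d n : ℕ) (hlk : l < k) (hd : Nat.gcd l k = d) (hk : k = n * d)
    (hn : 1 < n)
    (F : Type*) [Field F] [Fintype F] [DecidableEq F] (hF : Fintype.card F = 2 ^ k)
    (a : F) (ha : a ≠ 0) :
    ((Finset.univ.filter (fun x : F => x ^ (2 ^ l + 1) + x + a = 0)).card = 1 ↔
      (Zseq l n a = 0 ∧ Cseq l a n ≠ 0)) ∧
    (Zseq l n a = 0 → Cseq l a n ≠ 0 →
      ∀ x : F, x ^ (2 ^ l + 1) + x + a = 0 ↔
        x = (a * (Cseq l a n) ^ (2 ^ l - 1)) ^ (2 ^ (k - 1))) := by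
  obtain ⟨ν, rfl⟩ : ∃ ν, n = ν + 2 := ⟨n - 2, by omega⟩
  have hk0 : 0 < k := by omega
  haveI : CharP F 2 := char_two_of_card hk0 hF
  have hd0 : 0 < d := by
    rcases Nat.eq_zero_or_pos d with h | h
    · subst h; rw [Nat.mul_zero] at hk; omega
    · exact h
  have hdl : d ∣ l := hd ▸ Nat.gcd_dvd_left l k
  obtain ⟨t, hl⟩ : ∃ t, l = d * t := hdl
  have hl0 : 0 < l := by
    rcases Nat.eq_zero_or_pos l with h | h
    · exfalso
      subst h
      simp [Nat.gcd_zero_left] at hd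
      subst hd
      have h2 : 2 * k ≤ (ν+2) * k := Nat.mul_le_mul_right k (by omega)
      omega
    · exact h
  have hco : Nat.Coprime t (ν+2) := by
    have h1 : Nat.gcd (d*t) ((ν+2)*d) = d := by rw [← hl, ← hk]; exact hd
    rw [Nat.mul_comm (ν+2) d, Nat.gcd_mul_left] at h1
    have h2 : d * Nat.gcd t (ν+2) = d * 1 := by rw [h1, Nat.mul_one]
    exact Nat.eq_of_mul_eq_mul_left hd0 h2
  have hln : l * (ν+2) = k * t := by rw [hl, hk]; ring
  have huniv : ∀ y : F, y^((2^l)^(ν+2)) = y := S13.huniv_of hF hln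
  have hsCn : (a * (Cseq l a (ν+2)) ^ (2^l - 1)) * Cseq l a (ν+2) = a * (Cseq l a (ν+2))^(2^l) := by
    rw [mul_assoc, ← pow_succ, Nat.sub_add_cancel Nat.one_le_two_pow]
  have hx02 : ((a * (Cseq l a (ν+2)) ^ (2^l - 1)) ^ (2 ^ (k - 1)))
      * ((a * (Cseq l a (ν+2)) ^ (2^l - 1)) ^ (2 ^ (k - 1)))
      = a * (Cseq l a (ν+2)) ^ (2^l - 1) := by
    rw [← pow_add]
    have he : 2^(k-1) + 2^(k-1) = 2^k := by
      have h2 : 2^k = 2^(k-1) * 2 := by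
        rw [← pow_succ]
        congr 1
        omega
      omega
    rw [he, ← hF]
    exact FiniteField.pow_card _
  have part2 : Zseq l (ν+2) a = 0 → Cseq l a (ν+2) ≠ 0 →
      ∀ x : F, x ^ (2 ^ l + 1) + x + a = 0 ↔
        x = (a * (Cseq l a (ν+2)) ^ (2 ^ l - 1)) ^ (2 ^ (k - 1)) := by
    intro hZ hC x
    constructor
    · intro hroot
      have hroot' : x^(2^l)*x + x + a = 0 := by rw [← pow_succ]; exact hroot
      exact S13.uniq_root hroot' (huniv x) hZ hC hsCn hx02
    · rintro rfl
      have h := S13.exist_root (huniv a) hZ hC hsCn hx02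
      rw [pow_succ]
      exact h
  refine ⟨?_, part2⟩
  constructor
  · intro hcard1
    obtain ⟨x, hxmem⟩ := Finset.card_eq_one.mp hcard1
    have hxin : x ∈ Finset.univ.filter (fun x : F => x ^ (2 ^ l + 1) + x + a = 0) := by
      rw [hxmem]; exact Finset.mem_singleton_self x
    have hxroot : x^(2^l)*x + x + a = 0 := by
      rw [← pow_succ]
      exact (Finset.mem_filter.mp hxin).2
    have huniq : ∀ y : F, y^(2^l)*y + y + a = 0 → y = x := by
      intro y hy
      have hyin : y ∈ Finset.univ.filter (fun x : F => x ^ (2 ^ l + 1) + x + a = 0) :=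
        Finset.mem_filter.mpr ⟨Finset.mem_univ y, by rw [pow_succ]; exact hy⟩
      rw [hxmem] at hyin
      exact Finset.mem_singleton.mp hyin
    by_cases hC : Cseq l a (ν+2) = 0
    · exfalso
      have hcex := S13.lam_exists hF hk hl hd0 hco ha (S13.xne ha hxroot)
      have hθex := S13.trace_one hF hk hl hd0 (by omega) hco huniv
      obtain ⟨y, hyne, hy⟩ := S13.second_root_L2 ha hxroot huniv hC hcex hθex
      exact hyne (huniq y hy)
    · refine ⟨?_, hC⟩
      by_contra hZ
      obtain ⟨y, hyne, hy⟩ := S13.second_root_L1 ha hxroot (huniv x) (huniv a) hC hZ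
      exact hyne (huniq y hy)
  · rintro ⟨hZ, hC⟩
    have hset : Finset.univ.filter (fun x : F => x ^ (2 ^ l + 1) + x + a = 0)
        = {(a * (Cseq l a (ν+2)) ^ (2 ^ l - 1)) ^ (2 ^ (k - 1))} := by
      ext y
      rw [Finset.mem_filter, Finset.mem_singleton]
      constructor
      · intro ⟨_, hy⟩
        exact (part2 hZ hC y).mp hy
      · intro hy
        exact ⟨Finset.mem_univ y, (part2 hZ hC y).mpr hy⟩
    rw [hset]
    exact Finset.card_singleton _
end

section
/- Let l < k with gcd(l,k) = d, and let a in GF(2^k)* and c in GF(2^d). If u in GF(2^k) satisfies a^{2^l} u^{2^{2l}} + u^{2^l} + a u = 0 then Tr^k_d(u) = 0. Consequently, any two zeros v, v' in GF(2^k) of F_a(x) = a^{2^l} x^{2^{2l}} + x^{2^l} + a x + c satisfy Tr^k_d(v) = Tr^k_d(v'), and this common value lies in {0, c}. -/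
/-- any zero of the homogeneous part of `F_a` has relative trace `0`,
hence all zeros of `F_a(x) = a^(2^l) x^(2^(2l)) + x^(2^l) + a x + c` have the same
relative trace to `GF(2^d)`, lying in `{0, c}`. -/
theorem stmt_15 (k l d n : ℕ) (hlk : l < k) (hd : Nat.gcd l k = d) (hk : k = n * d)
    (F : Type*) [Field F] [Fintype F] (hF : Fintype.card F = 2 ^ k)
    (a : F) (ha : a ≠ 0) (c : F) (hc : c ^ (2 ^ d) = c) :
    (∀ u : F, a ^ (2 ^ l) * u ^ (2 ^ (2 * l)) + u ^ (2 ^ l) + a * u = 0 →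
      ∑ i ∈ Finset.range n, u ^ (2 ^ (i * d)) = 0) ∧
    (∀ v v' : F,
      a ^ (2 ^ l) * v ^ (2 ^ (2 * l)) + v ^ (2 ^ l) + a * v + c = 0 →
      a ^ (2 ^ l) * v' ^ (2 ^ (2 * l)) + v' ^ (2 ^ l) + a * v' + c = 0 →
      (∑ i ∈ Finset.range n, v ^ (2 ^ (i * d)) = ∑ i ∈ Finset.range n, v' ^ (2 ^ (i * d))) ∧
      (∑ i ∈ Finset.range n, v ^ (2 ^ (i * d)) = 0 ∨
       ∑ i ∈ Finset.range n, v ^ (2 ^ (i * d)) = c)) := by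
  classical
  have hk0 : 0 < k := lt_of_le_of_lt (Nat.zero_le l) hlk
  -- characteristic 2
  have h2 : (2 : F) = 0 := by
    have h := FiniteField.cast_card_eq_zero F
    rw [hF] at h
    push_cast at h
    exact (pow_eq_zero_iff hk0.ne').mp h
  haveI : CharP F (ringChar F) := ringChar.charP F
  have hrc : ringChar F = 2 := by
    have hprime : (ringChar F).Prime := CharP.char_is_prime F _
    have hdvd : ringChar F ∣ 2 := by
      have h : ((2:ℕ) : F) = 0 := by exact_mod_cast h2
      exact (CharP.cast_eq_zero_iff F (ringChar F) 2).mp h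
    exact (Nat.prime_dvd_prime_iff_eq hprime Nat.prime_two).mp hdvd
  haveI hc2 : CharP F 2 := hrc ▸ (ringChar.charP F)
  haveI := Fact.mk Nat.prime_two
  have hadd : ∀ x : F, x + x = 0 := fun x => by rw [← two_mul, h2, zero_mul]
  have frob : ∀ (x y : F) (m : ℕ), (x+y)^(2^m) = x^(2^m) + y^(2^m) := by
    intro x y m
    exact add_pow_char_pow (R := F) (p := 2) (n := m) (x := x) (y := y)
  have hxk : ∀ x : F, x ^ (2^k) = x := fun x => by rw [← hF]; exact FiniteField.pow_card x
  set T : F → F := fun x => ∑ i ∈ Finset.range n, x ^ (2^(i*d)) with hT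
  have T0 : T 0 = 0 := by
    simp only [hT]
    apply Finset.sum_eq_zero
    intro i _
    exact zero_pow (Nat.pos_of_ne_zero (by positivity)).ne'
  have Tadd : ∀ x y : F, T (x + y) = T x + T y := by
    intro x y
    simp only [hT]
    rw [← Finset.sum_add_distrib]
    exact Finset.sum_congr rfl fun i _ => frob x y (i*d)
  have Tsq : ∀ x : F, T (x^2) = (T x)^2 := by
    intro x
    simp only [hT]
    rw [sum_pow_char (p := 2)]
    exact Finset.sum_congr rfl fun i _ => by rw [← pow_mul, ← pow_mul, Nat.mul_comm]
  have TfrobD : ∀ x : F, T (x^(2^d)) = T x := by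
    intro x
    have key : ∀ i : ℕ, (x^(2^d))^(2^(i*d)) = x^(2^((i+1)*d)) := by
      intro i
      rw [← pow_mul, ← pow_add]
      congr 1
      rw [Nat.add_mul, Nat.one_mul, Nat.add_comm]
    have h1 := Finset.sum_range_succ' (fun i => x^(2^(i*d))) n
    have h2' := Finset.sum_range_succ (fun i => x^(2^(i*d))) n
    simp only [hT]
    calc ∑ i ∈ Finset.range n, (x^(2^d)) ^ (2^(i*d))
        = ∑ i ∈ Finset.range n, x^(2^((i+1)*d)) := Finset.sum_congr rfl fun i _ => key i
      _ = ∑ i ∈ Finset.range n, x ^ (2^(i*d)) := by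
          have hn : x^(2^(n*d)) = x := by rw [← hk]; exact hxk x
          have h0 : x^(2^(0*d)) = x := by norm_num
          have hcomb := h1.symm.trans h2'
          simp only [h0, hn] at hcomb
          linear_combination hcomb
  have TfrobE : ∀ (e : ℕ) (x : F), T (x^(2^(d*e))) = T x := by
    intro e
    induction e with
    | zero => intro x; simp
    | succ e ih =>
        intro x
        have hx : x ^ (2^(d*(e+1))) = (x ^ (2^(d*e)))^(2^d) := by
          rw [← pow_mul, ← pow_add]
          congr 1 <;> ring
        rw [hx, TfrobD, ih]
  have TfrobL : ∀ x : F, T (x^(2^l)) = T x := by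
    have hdl : d ∣ l := hd ▸ Nat.gcd_dvd_left l k
    obtain ⟨e, he⟩ := hdl
    intro x
    rw [he]
    exact TfrobE e x
  have hcfix : ∀ i : ℕ, c ^ (2^(i*d)) = c := by
    intro i
    induction i with
    | zero => norm_num
    | succ i ih =>
        have : c ^ (2^((i+1)*d)) = (c ^ (2^(i*d)))^(2^d) := by
          rw [← pow_mul, ← pow_add]
          congr 1 <;> ring
        rw [this, ih, hc]
  have Tsmul : ∀ x : F, T (c * x) = c * T x := by
    intro x
    simp only [hT, Finset.mul_sum]
    exact Finset.sum_congr rfl fun i _ => by rw [mul_pow, hcfix i]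
  -- exponent bookkeeping
  set q : ℕ := 2^l with hq
  have hq2 : (2:ℕ)^(2*l) = q*q := by rw [hq, ← pow_add, Nat.two_mul]
  have hq0 : q ≠ 0 := by positivity
  -- main homogeneous claim, affine version with constant c' (c' = 0 or c)
  have key : ∀ (c' u : F), c'^(2^d) = c' →
      a ^ q * u ^ (q*q) + u ^ q + a * u + c' = 0 →
      (T u)^2 + c' * T u = 0 := by
    intro c' u hc' hu
    set s : F := a * u^(q+1) with hs
    have hstep : s^q + (u^2)^q + s + c' * u^q = 0 := by
      have h1 : (a ^ q * u ^ (q*q) + u ^ q + a * u + c') * u^q = 0 := by rw [hu]; ring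
      calc s^q + (u^2)^q + s + c' * u^q
          = (a ^ q * u ^ (q*q) + u ^ q + a * u + c') * u^q := by
            rw [hs]; rw [mul_pow]
            ring
        _ = 0 := h1
    have hcfix' : ∀ i : ℕ, c' ^ (2^(i*d)) = c' := by
      intro i
      induction i with
      | zero => norm_num
      | succ i ih =>
          have : c' ^ (2^((i+1)*d)) = (c' ^ (2^(i*d)))^(2^d) := by
            rw [← pow_mul, ← pow_add]; congr 1 <;> ring
          rw [this, ih, hc']
    have Tsmul' : ∀ x : F, T (c' * x) = c' * T x := by
      intro x
      simp only [hT, Finset.mul_sum]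
      exact Finset.sum_congr rfl fun i _ => by rw [mul_pow, hcfix' i]
    have hTstep : T (s^q + (u^2)^q + s + c' * u^q) = 0 := by rw [hstep, T0]
    rw [Tadd, Tadd, Tadd, Tsmul'] at hTstep
    rw [TfrobL s, TfrobL (u^2), TfrobL u, Tsq] at hTstep
    -- hTstep : T s + (T u)^2 + T s + c' * T u = 0
    calc (T u)^2 + c' * T u
        = T s + (T u)^2 + T s + c' * T u := by
          have hts := hadd (T s); linear_combination -hts
      _ = 0 := hTstep
  have mainq : ∀ u : F, a ^ q * u ^ (q*q) + u ^ q + a * u = 0 → T u = 0 := by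
    intro u hu
    have hu' : a ^ q * u ^ (q*q) + u ^ q + a * u + 0 = 0 := by rw [add_zero]; exact hu
    have h := key 0 u (by simp) hu'
    rw [zero_mul, add_zero, pow_eq_zero_iff (two_ne_zero)] at h
    exact h
  have frobq : ∀ x y : F, (x+y)^q = x^q + y^q := fun x y => frob x y l
  have frobqq : ∀ x y : F, (x+y)^(q*q) = x^(q*q) + y^(q*q) := by
    intro x y
    rw [← hq2]
    exact frob x y (2*l)
  constructor
  · intro u hu
    rw [hq2] at hu
    exact mainq u hu
  · intro v v' hv hv'
    rw [hq2] at hv hv'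
    have hvq : a ^ q * v ^ (q*q) + v ^ q + a * v + c = 0 := hv
    have hv'q : a ^ q * v' ^ (q*q) + v' ^ q + a * v' + c = 0 := hv'
    have hsum : a ^ q * (v+v') ^ (q*q) + (v+v') ^ q + a * (v+v') = 0 := by
      rw [frobqq, frobq]
      have hcc := hadd c
      linear_combination hvq + hv'q - hcc
    have htdiff : T (v + v') = 0 := mainq _ hsum
    rw [Tadd] at htdiff
    have heq : T v = T v' := by
      have := hadd (T v')
      linear_combination htdiff - this
    refine ⟨heq, ?_⟩
    have h := key c v hc hvq
    have : T v * (T v + c) = 0 := by ring_nf; linear_combination h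
    rcases mul_eq_zero.mp this with h1 | h1
    · exact Or.inl h1
    · right
      have := hadd c
      linear_combination h1 - this
end

section
/- Let l < k with gcd(l,k) = d, k = n d, n > 1, c in GF(2^d), and a in GF(2^k). Then the polynomial F_a(x) = a^{2^l} x^{2^{2l}} + x^{2^l} + a x + c has exactly one zero in GF(2^k) if and only if Z_n(a) != 0; moreover this zero equals c C_n(a)/Z_n(a), and its trace Tr^k_d of it equals n*c (computed in GF(2^d)). -/
open Finset

namespace Stmt16
variable {F : Type*} [Field F]

def Pseq (b : ℕ → F) (s : ℕ) : ℕ → F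
  | 0 => 0
  | 1 => 1
  | (m+2) => Pseq b s (m+1) + b (m+s) * Pseq b s m

@[simp] lemma Pseq_zero (b : ℕ → F) (s : ℕ) : Pseq b s 0 = 0 := rfl
@[simp] lemma Pseq_one (b : ℕ → F) (s : ℕ) : Pseq b s 1 = 1 := rfl
lemma Pseq_two (b : ℕ → F) (s : ℕ) : Pseq b s 2 = 1 := by
  show Pseq b s 1 + b (0+s) * Pseq b s 0 = 1
  simp
lemma Pseq_succ (b : ℕ → F) (s m : ℕ) :
    Pseq b s (m+2) = Pseq b s (m+1) + b (m+s) * Pseq b s m := rfl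

lemma two_step {P : ℕ → Prop} (h0 : P 0) (h1 : P 1)
    (hs : ∀ m, P m → P (m+1) → P (m+2)) : ∀ m, P m := by
  have key : ∀ m, P m ∧ P (m+1) := by
    intro m
    induction m with
    | zero => exact ⟨h0, h1⟩
    | succ i ih => exact ⟨ih.2, hs i ih.1 ih.2⟩
  exact fun m => (key m).1

lemma Pseq_peel (b : ℕ → F) : ∀ m s, Pseq b s (m+2) = Pseq b (s+1) (m+1) + b (s+1) * Pseq b (s+2) m := by
  intro m
  induction m using two_step with
  | h0 => intro s; simp [Pseq_two]
  | h1 => intro s; simp [Pseq_succ, Pseq_two, Nat.add_comm]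
  | hs m ih1 ih2 =>
    intro s
    rw [Pseq_succ b s (m+2), ih2 s, ih1 s,
      show (m+2+1 : ℕ) = (m+1)+2 from by omega, Pseq_succ b (s+1) (m+1),
      Pseq_succ b (s+2) m,
      show (m+1+(s+1) : ℕ) = m+2+s from by omega,
      show (m+(s+2) : ℕ) = m+2+s from by omega]
    ring

lemma Pseq_period (b : ℕ → F) (n : ℕ) (hb : ∀ j, b (j + n) = b j) :
    ∀ m s, Pseq b (s + n) m = Pseq b s m := by
  intro m
  induction m using two_step with
  | h0 => intro s; simp
  | h1 => intro s; simp
  | hs m ih1 ih2 =>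
    intro s
    rw [Pseq_succ, Pseq_succ, ih1, ih2, show m + (s + n) = (m + s) + n by ring, hb]

lemma Pseq_W (b : ℕ → F) (h2 : (2:F) = 0) :
    ∀ m s, Pseq b s (m+2) * Pseq b (s+1) m + Pseq b s (m+1) * Pseq b (s+1) (m+1)
      = ∏ j ∈ Finset.range m, b (s+1+j) := by
  intro m
  induction m with
  | zero => intro s; simp [Pseq_two]
  | succ m ih =>
    intro s
    rw [Finset.prod_range_succ,
      show (m+1+1 : ℕ) = m+2 from by omega,
      Pseq_succ b s (m+1), Pseq_succ b (s+1) m,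
      show (m+1+s : ℕ) = s+1+m from by omega,
      show (m+(s+1) : ℕ) = s+1+m from by omega]
    linear_combination (b (s+1+m)) * ih s + (Pseq b s (m+2) * Pseq b (s+1) (m+1)) * h2

section Cyclic
variable (b : ℕ → F) (n : ℕ)

/-- The `Z` quantity with shift `s`. -/
def Zsh (s : ℕ) : F := Pseq b s (n+1) + b s * Pseq b (s+1) (n-1)

variable (hb : ∀ j, b (j + n) = b j) (hn : 2 ≤ n)
include hb hn

lemma Zsh_shift (s : ℕ) : Zsh b n (s+1) = Zsh b n s := by
  obtain ⟨N, rfl⟩ : ∃ N, n = N + 2 := ⟨n - 2, by omega⟩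
  show Pseq b (s+1) (N+3) + b (s+1) * Pseq b (s+2) (N+1)
    = Pseq b s (N+3) + b s * Pseq b (s+1) (N+1)
  rw [show (N+3 : ℕ) = (N+1)+2 from by omega, Pseq_succ b (s+1) (N+1),
    Pseq_peel b (N+1) s,
    show (N+1+(s+1) : ℕ) = s + (N+2) from by omega, hb]
  ring

lemma Zsh_const (s : ℕ) : Zsh b n s = Zsh b n 0 := by
  induction s with
  | zero => rfl
  | succ s ih => rw [Zsh_shift b n hb hn s, ih]

/-- Identity 1 : `L (C_n) = Z`. -/
lemma identity1 (h2 : (2:F) = 0) :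
    b 1 * Pseq b 2 n + Pseq b 1 n + b 0 * Pseq b 0 n = Zsh b n 0 := by
  obtain ⟨N, rfl⟩ : ∃ N, n = N + 2 := ⟨n - 2, by omega⟩
  show _ = Pseq b 0 (N+3) + b 0 * Pseq b 1 (N+1)
  rw [show (N+3 : ℕ) = (N+1)+2 from by omega, Pseq_peel b (N+1) 0,
    Pseq_succ b 2 N, Pseq_peel b N 0,
    show (N+(2:ℕ)) = 0 + (N+2) from by omega, hb]
  ring_nf
  linear_combination (b 1 * b 0 * Pseq b 2 N) * h2

end Cyclic

section Xlemma
variable (b : ℕ → F)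

def Qm (j : ℕ) : F := ∏ i ∈ Finset.range (j-1), b (i+1)

def Atil : ℕ → F
  | 0 => 1
  | (j+1) => b 0 * (Pseq b 1 j)^2

def Btil (j : ℕ) : F := (Pseq b 0 j)^2

lemma Qm_zero : Qm b 0 = 1 := by simp [Qm]
lemma Qm_one : Qm b 1 = 1 := by simp [Qm]
lemma Qm_succ (j : ℕ) : Qm b (j+2) = Qm b (j+1) * b (j+1) := by
  simp only [Qm, show (j+2-1 : ℕ) = (j+1-1)+1 from by omega]
  rw [Finset.prod_range_succ, show (j+1-1 : ℕ) = j from by omega]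

lemma add_sq' (h2 : (2:F) = 0) (x y : F) : (x + y)^2 = x^2 + y^2 := by
  linear_combination (2*x*y) * h2 - (x*y)*h2

lemma Xlemma (h2 : (2:F) = 0) (x : ℕ → F)
    (hR : ∀ j, b (j+1) * x (j+2) = x (j+1) + b j * x j) :
    ∀ j, Qm b j * x j = Btil b j * x 1 + Atil b j * x 0 := by
  intro j
  induction j using two_step with
  | h0 => simp [Qm_zero, Btil, Atil]
  | h1 => simp [Qm_one, Btil, Atil, Pseq_two]
  | hs j ih1 ih2 =>
    have key : Qm b (j+2) * x (j+2) = Qm b (j+1) * x (j+1) + b j * (Qm b (j+1) * x j) := by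
      rw [Qm_succ]
      have := hR j
      calc Qm b (j+1) * b (j+1) * x (j+2) = Qm b (j+1) * (b (j+1) * x (j+2)) := by ring
        _ = Qm b (j+1) * (x (j+1) + b j * x j) := by rw [this]
        _ = _ := by ring
    match j with
    | 0 =>
      rw [key, ih2]
      simp [Btil, Atil, Qm_one, Pseq_two]
    | (i+1) =>
      rw [key, ih2, Qm_succ b i, show Qm b (i+1) * b (i+1) * x (i+1)
          = b (i+1) * (Qm b (i+1) * x (i+1)) from by ring, ih1]
      have hB : Btil b (i+3) = Btil b (i+2) + (b (i+1))^2 * Btil b (i+1) := by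
        simp only [Btil, show (i+3:ℕ) = (i+1)+2 from by omega, Pseq_succ b 0 (i+1),
          show (i+1+0 : ℕ) = i+1 from by omega]
        rw [add_sq' h2]
        ring
      have hA : Atil b (i+3) = Atil b (i+2) + (b (i+1))^2 * Atil b (i+1) := by
        simp only [Atil, Pseq_succ b 1 i, show (i+(1:ℕ)) = i+1 from by omega]
        rw [add_sq' h2]
        ring
      rw [hB, hA]
      ring

end Xlemma

lemma sum_shift (n : ℕ) (g : ℕ → F) (hg : g n = g 0) :
    ∑ j ∈ Finset.range n, g (j+1) = ∑ j ∈ Finset.range n, g j := by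
  have h1 := Finset.sum_range_succ g n
  have h2' := Finset.sum_range_succ' g n
  rw [h1, hg] at h2'
  exact (add_right_cancel h2'.symm)

/-- trace identity : `∑_j P j n = n • Z`. -/
lemma trace_identity (b : ℕ → F) (n : ℕ) (hb : ∀ j, b (j + n) = b j) (hn : 2 ≤ n)
    (h2 : (2:F) = 0) :
    ∑ j ∈ Finset.range n, Pseq b j n = n • (Zsh b n 0) := by
  obtain ⟨N, hN⟩ : ∃ N, n = N + 2 := ⟨n - 2, by omega⟩
  have shift1 : ∀ g : ℕ → F, g n = g 0 → ∑ j ∈ Finset.range n, g (j+1) = ∑ j ∈ Finset.range n, g j := by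
    intro g hg
    have h1 := Finset.sum_range_succ g n
    have h2' := Finset.sum_range_succ' g n
    rw [h1, hg] at h2'
    exact (add_right_cancel h2'.symm)
  have key : ∀ j, Pseq b j n = Zsh b n 0 + b j * Pseq b (j+1) (n-1) + b (n-1+j) * Pseq b j (n-1) := by
    intro j
    have e1 : Pseq b j (n+1) = Pseq b j n + b (n-1+j) * Pseq b j (n-1) := by
      rw [hN, show (N+2-1:ℕ) = N+1 from by omega, show (N+2+1:ℕ) = (N+1)+2 from by omega,
        Pseq_succ b j (N+1)]
    have e2 : Zsh b n j = Pseq b j (n+1) + b j * Pseq b (j+1) (n-1) := rfl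
    have hz : Zsh b n j = Zsh b n 0 := Zsh_const b n hb hn j
    rw [e1, hz] at e2
    linear_combination (-1 : F) * e2 - (b j * Pseq b (j+1) (n-1) + b (n-1+j) * Pseq b j (n-1)) * h2
  rw [Finset.sum_congr rfl (fun j _ => key j), Finset.sum_add_distrib, Finset.sum_add_distrib,
    Finset.sum_const, Finset.card_range]
  have hS : ∀ t, ∑ j ∈ Finset.range n, b (j+t) * Pseq b (j+t+1) (n-1)
      = ∑ j ∈ Finset.range n, b j * Pseq b (j+1) (n-1) := by
    intro t
    induction t with
    | zero => simp
    | succ t ih =>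
      rw [← ih]
      have := shift1 (fun m => b (m+t) * Pseq b (m+t+1) (n-1)) (by
        show b (n+t) * Pseq b (n+t+1) (n-1) = b (0+t) * Pseq b (0+t+1) (n-1)
        rw [show (n+t+1:ℕ) = (t+1)+n from by omega, show (n+t:ℕ) = t+n from by omega, hb,
          Pseq_period b n hb, show (0+t:ℕ) = t from by omega])
      rw [← this]
      apply Finset.sum_congr rfl
      intro j _
      rw [show (j+(t+1):ℕ) = j+1+t from by omega]
  have hshift : ∑ j ∈ Finset.range n, b (n-1+j) * Pseq b j (n-1)
      = ∑ j ∈ Finset.range n, b j * Pseq b (j+1) (n-1) := by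
    rw [← hS (n-1)]
    apply Finset.sum_congr rfl
    intro j _
    rw [show (n-1+j:ℕ) = j+(n-1) from by omega,
      show (j+(n-1)+1:ℕ) = j + n from by omega, Pseq_period b n hb]
  rw [hshift]
  linear_combination (∑ j ∈ Finset.range n, b j * Pseq b (j+1) (n-1)) * h2

end Stmt16

/-- `F_a(x) = a^(2^l) x^(2^(2l)) + x^(2^l) + a x + c` has exactly one
zero in `GF(2^k)` iff `Z_n(a) ≠ 0`; this zero is `c C_n(a)/Z_n(a)` and its relative
trace to `GF(2^d)` equals `n • c`. -/
theorem stmt_16 (k l d n : ℕ) (hlk : l < k) (hd : Nat.gcd l k = d) (hk : k = n * d)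
    (hn : 1 < n)
    (F : Type*) [Field F] [Fintype F] (hF : Fintype.card F = 2 ^ k)
    (a : F) (c : F) (hc : c ^ (2 ^ d) = c) :
    ((∃! v : F, a ^ (2 ^ l) * v ^ (2 ^ (2 * l)) + v ^ (2 ^ l) + a * v + c = 0) ↔
      Zseq l n a ≠ 0) ∧
    (Zseq l n a ≠ 0 →
      (a ^ (2 ^ l) * (c * Cseq l a n / Zseq l n a) ^ (2 ^ (2 * l))
          + (c * Cseq l a n / Zseq l n a) ^ (2 ^ l)
          + a * (c * Cseq l a n / Zseq l n a) + c = 0) ∧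
      ∑ i ∈ Finset.range n, (c * Cseq l a n / Zseq l n a) ^ (2 ^ (i * d)) = n • c) := by
  classical
  open Stmt16 in
  -- ===== arithmetic setup =====
  have hk0 : 0 < k := by omega
  have hd0 : 0 < d := by
    rcases Nat.eq_zero_or_pos d with h | h
    · exfalso; rw [h, Nat.mul_zero] at hk; omega
    · exact h
  have hl0 : 0 < l := by
    rcases Nat.eq_zero_or_pos l with h | h
    · exfalso
      rw [h, Nat.gcd_zero_left] at hd
      rw [← hd] at hk
      nlinarith
    · exact h
  have hdl : d ∣ l := hd ▸ Nat.gcd_dvd_left l k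
  set l' := l / d with hl'def
  have hll' : l = d * l' := (Nat.mul_div_cancel' hdl).symm
  have hl'0 : 0 < l' := by
    rcases Nat.eq_zero_or_pos l' with h | h
    · rw [h, Nat.mul_zero] at hll'; omega
    · exact h
  have hkd : k / d = n := by rw [hk]; exact Nat.mul_div_cancel n hd0
  have hco : Nat.Coprime l' n := by
    have hpos : 0 < Nat.gcd l k := by rw [hd]; exact hd0
    have := Nat.coprime_div_gcd_div_gcd hpos
    rwa [hd, hkd] at this
  have hnlk : n * l = k * l' := by rw [hll', hk]; ring
  have hn2 : 2 ≤ n := hn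
  -- ===== field char-2 setup =====
  have h2 : (2 : F) = 0 := by
    have h := FiniteField.cast_card_eq_zero F
    rw [hF] at h
    push_cast at h
    exact pow_eq_zero_iff (by omega) |>.mp h
  have hq : ∀ x : F, x ^ (2^k) = x := fun x => by
    have := FiniteField.pow_card x; rwa [hF] at this
  have tw : ∀ (x : F) (s t : ℕ), (x^(2^s))^(2^t) = x^(2^(s+t)) := fun x s t => by
    rw [← pow_mul, ← pow_add]
  have hqm : ∀ (x : F) (q : ℕ), x^(2^(k*q)) = x := by
    intro x q
    induction q with
    | zero => simp
    | succ q ih => rw [show k*(q+1) = k*q + k from by ring, ← tw, ih, hq]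
  have hxnl : ∀ x : F, x^(2^(n*l)) = x := fun x => by rw [hnlk]; exact hqm x l'
  have addpow : ∀ (m : ℕ) (x y : F), (x+y)^(2^m) = x^(2^m) + y^(2^m) := by
    intro m
    induction m with
    | zero => intro x y; simp
    | succ m ih =>
      intro x y
      rw [pow_succ, pow_mul, pow_mul, pow_mul, ih, add_sq' h2]
  have sum_pow : ∀ (m : ℕ) (s : Finset ℕ) (f : ℕ → F),
      (∑ i ∈ s, f i)^(2^m) = ∑ i ∈ s, (f i)^(2^m) := by
    intro m s f
    induction s using Finset.cons_induction with
    | empty => simp [zero_pow (Nat.two_pow_pos m).ne']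
    | cons i s his ih => rw [Finset.sum_cons, Finset.sum_cons, addpow, ih]
  -- ===== sequence b =====
  set b : ℕ → F := fun j => a ^ (2^(j*l)) with hbdef
  have hb0 : b 0 = a := by simp [hbdef]
  have hbpow : ∀ s t : ℕ, (b s)^(2^(t*l)) = b (s+t) := by
    intro s t
    simp only [hbdef]
    rw [tw]
    congr 2
    ring
  have hbper : ∀ j, b (j+n) = b j := by
    intro j
    simp only [hbdef]
    rw [show (j+n)*l = n*l + j*l from by ring, ← tw, hxnl]
  have hPfrob : ∀ m s t, (Pseq b s m)^(2^(t*l)) = Pseq b (s+t) m := by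
    intro m
    induction m using Stmt16.two_step with
    | h0 => intro s t; simp [(Nat.two_pow_pos (t*l)).ne']
    | h1 => intro s t; simp
    | hs m ih1 ih2 =>
      intro s t
      rw [Pseq_succ, addpow, mul_pow, hbpow, ih1, ih2, Pseq_succ b (s+t) m,
        show m+s+t = m+(s+t) from by ring]
  have hCP : ∀ m, Cseq l a m = Pseq b 0 m := by
    intro m
    induction m using Stmt16.two_step with
    | h0 => rfl
    | h1 => rfl
    | hs m ih1 ih2 =>
      match m, ih1, ih2 with
      | 0, ih1, ih2 => exact (Pseq_two b 0).symm
      | (i+1), ih1, ih2 =>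
        show Cseq l a (i+2) + a ^ (2 ^ ((i + 1) * l)) * Cseq l a (i + 1) = _
        rw [ih2, ih1, Pseq_succ b 0 (i+1), show (i+1+0 : ℕ) = i+1 from by ring]
  have hZeq : Zseq l n a = Zsh b n 0 := by
    show Cseq l a (n+1) + a * (Cseq l a (n-1))^(2^l) = Pseq b 0 (n+1) + b 0 * Pseq b 1 (n-1)
    rw [hCP, hCP, hb0, show (2^l : ℕ) = 2^(1*l) from by rw [one_mul],
      hPfrob (n-1) 0 1]
  have hcfix : ∀ m : ℕ, c^(2^(m*l)) = c := by
    have hcd : ∀ t : ℕ, c^(2^(d*t)) = c := by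
      intro t
      induction t with
      | zero => simp
      | succ t ih => rw [show d*(t+1) = d*t + d from by ring, ← tw, ih, hc]
    have hcl : c^(2^l) = c := by rw [hll']; exact hcd l'
    intro m
    induction m with
    | zero => simp
    | succ m ih => rw [show (m+1)*l = m*l + l from by ring, ← tw, ih, hcl]
  have hZ2 : (Zsh b n 0)^(2^l) = Zsh b n 0 := by
    show (Pseq b 0 (n+1) + b 0 * Pseq b 1 (n-1))^(2^l) = _
    rw [show (2^l : ℕ) = 2^(1*l) from by rw [one_mul], addpow, mul_pow, hbpow, hPfrob, hPfrob]
    exact Zsh_const b n hbper hn2 1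
  have hZfix : ∀ m : ℕ, (Zsh b n 0)^(2^(m*l)) = Zsh b n 0 := by
    intro m
    induction m with
    | zero => simp
    | succ m ih =>
      rw [show (m+1)*l = m*l + l from by ring, ← tw, ih,
        show (2^l : ℕ) = 2^(1*l) from by rw [one_mul]]
      rw [show (2^(1*l):ℕ) = 2^l from by rw [one_mul]]
      exact hZ2
  -- ===== part 2a : the explicit solution works =====
  have hsol : Zseq l n a ≠ 0 →
      a ^ (2 ^ l) * (c * Cseq l a n / Zseq l n a) ^ (2 ^ (2 * l))
        + (c * Cseq l a n / Zseq l n a) ^ (2 ^ l)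
        + a * (c * Cseq l a n / Zseq l n a) + c = 0 := by
    intro hZ
    have hZ' : Zsh b n 0 ≠ 0 := by rwa [hZeq] at hZ
    have hid1 := identity1 b n hbper hn2 h2
    rw [hZeq, hCP n]
    have hv2 : (c * Pseq b 0 n / Zsh b n 0)^(2^(2*l)) = c * Pseq b 2 n / Zsh b n 0 := by
      rw [div_pow, mul_pow, hcfix 2, hZfix 2, hPfrob n 0 2]
    have hv1 : (c * Pseq b 0 n / Zsh b n 0)^(2^l) = c * Pseq b 1 n / Zsh b n 0 := by
      rw [show (2^l : ℕ) = 2^(1*l) from by rw [one_mul], div_pow, mul_pow,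
        hcfix 1, hZfix 1, hPfrob n 0 1]
    rw [hv2, hv1]
    have hb1 : b 1 = a ^ (2^l) := by simp [hbdef, one_mul]
    rw [← hb1, ← hb0]
    field_simp
    linear_combination c * hid1 + c * Zsh b n 0 * h2
  -- ===== reindexing lemma =====
  have hreidx : ∀ x : F, ∑ i ∈ Finset.range n, x^(2^(i*d)) = ∑ j ∈ Finset.range n, x^(2^(j*l)) := by
    intro x
    obtain ⟨u', -, hu'⟩ := Nat.exists_mul_mod_eq_one_of_coprime hco hn
    obtain ⟨t, ht⟩ : ∃ t, l' * u' = n * t + 1 := ⟨l' * u' / n, by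
      have := Nat.div_add_mod (l' * u') n; omega⟩
    have hmod : ∀ m : ℕ, x^(2^(m*d)) = x^(2^((m % n)*d)) := by
      intro m
      conv_lhs => rw [show m = n*(m/n) + m % n from by have := Nat.div_add_mod m n; omega]
      rw [show (n*(m/n) + m % n)*d = k*(m/n) + (m % n)*d from by rw [hk]; ring, ← tw, hqm]
    have hval : ∀ j, x^(2^(j*l)) = x^(2^(((j*l') % n)*d)) := by
      intro j
      rw [show j*l = (j*l')*d from by rw [hll']; ring, hmod (j*l')]
    rw [show (∑ j ∈ Finset.range n, x^(2^(j*l)))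
        = ∑ j ∈ Finset.range n, x^(2^(((j*l') % n)*d)) from
      Finset.sum_congr rfl (fun j _ => hval j)]
    refine Finset.sum_nbij' (fun i => i * u' % n) (fun j => j * l' % n) ?_ ?_ ?_ ?_ ?_
    · intro i hi
      exact Finset.mem_range.mpr (Nat.mod_lt _ (by omega))
    · intro j hj
      exact Finset.mem_range.mpr (Nat.mod_lt _ (by omega))
    · intro i hi
      show (i * u' % n) * l' % n = i
      rw [Nat.mod_mul_mod, show i * u' * l' = i + n * (i * t) from by
        rw [show i * u' * l' = i * (l' * u') from by ring, ht]; ring,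
        Nat.add_mul_mod_self_left, Nat.mod_eq_of_lt (Finset.mem_range.mp hi)]
    · intro j hj
      show (j * l' % n) * u' % n = j
      rw [Nat.mod_mul_mod, show j * l' * u' = j + n * (j * t) from by
        rw [show j * l' * u' = j * (l' * u') from by ring, ht]; ring,
        Nat.add_mul_mod_self_left, Nat.mod_eq_of_lt (Finset.mem_range.mp hj)]
    · intro i hi
      show x ^ 2 ^ (i * d) = x ^ 2 ^ ((i * u' % n) * l' % n * d)
      rw [Nat.mod_mul_mod, show i * u' * l' = i + n * (i * t) from by
        rw [show i * u' * l' = i * (l' * u') from by ring, ht]; ring,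
        Nat.add_mul_mod_self_left, Nat.mod_eq_of_lt (Finset.mem_range.mp hi)]
  -- ===== part 2b : trace =====
  have htr : Zseq l n a ≠ 0 →
      ∑ i ∈ Finset.range n, (c * Cseq l a n / Zseq l n a) ^ (2 ^ (i * d)) = n • c := by
    intro hZ
    have hZ' : Zsh b n 0 ≠ 0 := by rwa [hZeq] at hZ
    rw [hreidx]
    have hval : ∀ j, (c * Cseq l a n / Zseq l n a)^(2^(j*l)) = c * Pseq b j n / Zsh b n 0 := by
      intro j
      rw [hZeq, hCP, div_pow, mul_pow, hcfix j, hZfix j, hPfrob n 0 j, Nat.zero_add]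
    rw [Finset.sum_congr rfl (fun j _ => hval j)]
    have : ∑ j ∈ Finset.range n, c * Pseq b j n / Zsh b n 0
        = c * (∑ j ∈ Finset.range n, Pseq b j n) / Zsh b n 0 := by
      rw [Finset.mul_sum, Finset.sum_div]
    rw [this, trace_identity b n hbper hn2 h2, nsmul_eq_mul, nsmul_eq_mul]
    field_simp
  -- ===== kernel triviality when Z ≠ 0 =====
  have hker : Zseq l n a ≠ 0 → ∀ w : F,
      b 1 * w^(2^(2*l)) + w^(2^l) + b 0 * w = 0 → w = 0 := by
    intro hZ w hw
    have hZ' : Zsh b n 0 ≠ 0 := by rwa [hZeq] at hZ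
    by_cases ha : a = 0
    · have hb : ∀ j, b j = 0 := fun j => by
        simp [hbdef, ha, zero_pow (Nat.two_pow_pos (j*l)).ne']
      rw [hb 1, hb 0] at hw
      simp only [zero_mul, add_zero, zero_add] at hw
      exact pow_eq_zero_iff (Nat.two_pow_pos l).ne' |>.mp hw
    · have hbne : ∀ j, b j ≠ 0 := fun j => pow_ne_zero _ ha
      set x : ℕ → F := fun j => w^(2^(j*l)) with hxdef
      have hx0 : x 0 = w := by simp [hxdef]
      have hR : ∀ j, b (j+1) * x (j+2) = x (j+1) + b j * x j := by
        intro j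
        have h := congrArg (fun y : F => y^(2^(j*l))) hw
        rw [addpow, addpow, mul_pow, mul_pow, zero_pow (Nat.two_pow_pos _).ne',
          hbpow 1 j, hbpow 0 j, tw, tw] at h
        have hxx2 : w ^ 2 ^ (2*l + j*l) = x (j+2) := by
          show _ = w ^ (2^((j+2)*l))
          congr 2
          ring
        have hxx1 : w ^ 2 ^ (l + j*l) = x (j+1) := by
          show _ = w ^ (2^((j+1)*l))
          congr 2
          ring
        rw [hxx2, hxx1, show (1+j : ℕ) = j+1 from by ring, show (0+j : ℕ) = j from by ring] at h
        show b (j+1) * x (j+2) = x (j+1) + b j * x j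
        linear_combination h - (x (j+1) + b j * (x j)) * h2
      have e1 := Xlemma b h2 x hR n
      have e2 := Xlemma b h2 x hR (n+1)
      have hxn : x n = w := hxnl w
      have hxn1 : x (n+1) = x 1 := by
        show w^(2^((n+1)*l)) = w^(2^(1*l))
        rw [show (n+1)*l = 1*l + n*l from by ring, ← tw, hxnl]
      rw [hxn, hx0] at e1
      rw [hxn1, hx0] at e2
      obtain ⟨N, hN⟩ : ∃ N, n = N+2 := ⟨n-2, by omega⟩
      have hbN2 : b (N+2) = b 0 := by
        have := hbper 0
        rwa [hN, Nat.zero_add] at this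
      have hAn : Atil b n = b 0 * (Pseq b 1 (N+1))^2 := by rw [hN]; rfl
      have hAn1 : Atil b (n+1) = b 0 * (Pseq b 1 (N+2))^2 := by rw [hN]; rfl
      have hBn : Btil b n = (Pseq b 0 (N+2))^2 := by rw [hN]; rfl
      have hBn1 : Btil b (n+1) = (Pseq b 0 (N+3))^2 := by rw [hN]; rfl
      have hQsucc : Qm b (n+1) = Qm b n * b 0 := by
        rw [hN, show (N+2+1 : ℕ) = (N+1)+2 from by ring, Qm_succ, hbN2]
      have hQW : Pseq b 0 (N+3) * Pseq b 1 (N+1) + Pseq b 0 (N+2) * Pseq b 1 (N+2) = Qm b n := by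
        have := Pseq_W b h2 (N+1) 0
        rw [show ((N+1)+2 : ℕ) = N+3 from by ring, show ((N+1)+1 : ℕ) = N+2 from by ring,
          show ((0:ℕ)+1) = 1 from rfl] at this
        rw [this, Qm, hN, show (N+2-1 : ℕ) = N+1 from by omega]
        exact Finset.prod_congr rfl (fun i _ => by rw [Nat.add_comm 1 i])
      have hZform : Zsh b n 0 = Pseq b 0 (N+3) + b 0 * Pseq b 1 (N+1) := by
        rw [hN]; rfl
      have hQne : Qm b n ≠ 0 := by
        rw [Qm]
        exact Finset.prod_ne_zero_iff.mpr (fun i _ => hbne (i+1))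
      rw [hAn, hBn, ← hQW] at e1
      rw [hAn1, hBn1, hQsucc, ← hQW] at e2
      have key : (Pseq b 0 (N+3) * Pseq b 1 (N+1) + Pseq b 0 (N+2) * Pseq b 1 (N+2))
          * (Pseq b 0 (N+3) + b 0 * Pseq b 1 (N+1))^2 * w = 0 := by
        linear_combination ((Pseq b 0 (N+3))^2
            + (Pseq b 0 (N+3) * Pseq b 1 (N+1) + Pseq b 0 (N+2) * Pseq b 1 (N+2)) * b 0) * e1
          + (Pseq b 0 (N+2))^2 * e2
          + (Pseq b 0 (N+3) * (Pseq b 1 (N+1))^3 * (b 0)^2 * w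
            + (Pseq b 0 (N+3))^2 * (Pseq b 1 (N+1))^2 * b 0 * w
            + Pseq b 0 (N+2) * Pseq b 1 (N+2) * (Pseq b 1 (N+1))^2 * (b 0)^2 * w
            + (Pseq b 0 (N+2))^2 * (Pseq b 0 (N+3))^2 * (x 1)) * h2
      rw [hQW, ← hZform] at key
      rcases mul_eq_zero.mp key with h | h
      · rcases mul_eq_zero.mp h with h' | h'
        · exact absurd h' hQne
        · exact absurd h' (pow_ne_zero 2 hZ')
      · exact h
  -- ===== nontrivial kernel when Z = 0 =====
  have hkernz : Zseq l n a = 0 → ∃ w : F, w ≠ 0 ∧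
      b 1 * w^(2^(2*l)) + w^(2^l) + b 0 * w = 0 := by
    intro hZ0
    have hZ0' : Zsh b n 0 = 0 := by rwa [hZeq] at hZ0
    have ha : a ≠ 0 := by
      intro ha
      have hb : ∀ j, b j = 0 := fun j => by
        simp [hbdef, ha, zero_pow (Nat.two_pow_pos (j*l)).ne']
      have hone : ∀ m, Pseq b 0 (m+1) = 1 := by
        intro m
        induction m with
        | zero => rfl
        | succ m ih => rw [Pseq_succ, hb, zero_mul, add_zero, ih]
      have hZ1 : Zsh b n 0 = 1 := by
        show Pseq b 0 (n+1) + b 0 * Pseq b 1 (n-1) = 1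
        rw [hb 0, zero_mul, add_zero, hone n]
      rw [hZ1] at hZ0'
      exact one_ne_zero hZ0'
    have hbne : ∀ j, b j ≠ 0 := fun j => pow_ne_zero _ ha
    obtain ⟨N, hN⟩ : ∃ N, n = N+2 := ⟨n-2, by omega⟩
    have hbN2 : b (N+2) = b 0 := by
      have := hbper 0
      rwa [hN, Nat.zero_add] at this
    have hAn : Atil b n = b 0 * (Pseq b 1 (N+1))^2 := by rw [hN]; rfl
    have hAn1 : Atil b (n+1) = b 0 * (Pseq b 1 (N+2))^2 := by rw [hN]; rfl
    have hBn : Btil b n = (Pseq b 0 (N+2))^2 := by rw [hN]; rfl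
    have hBn1 : Btil b (n+1) = (Pseq b 0 (N+3))^2 := by rw [hN]; rfl
    have hQsucc : Qm b (n+1) = Qm b n * b 0 := by
      rw [hN, show (N+2+1 : ℕ) = (N+1)+2 from by ring, Qm_succ, hbN2]
    have hQW : Pseq b 0 (N+3) * Pseq b 1 (N+1) + Pseq b 0 (N+2) * Pseq b 1 (N+2) = Qm b n := by
      have hW := Pseq_W b h2 (N+1) 0
      rw [show ((N+1)+2 : ℕ) = N+3 from by ring, show ((N+1)+1 : ℕ) = N+2 from by ring,
        show ((0:ℕ)+1) = 1 from rfl] at hW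
      rw [hW, Qm, hN, show (N+2-1 : ℕ) = N+1 from by omega]
      exact Finset.prod_congr rfl (fun i _ => by rw [Nat.add_comm 1 i])
    have hZform : Zsh b n 0 = Pseq b 0 (N+3) + b 0 * Pseq b 1 (N+1) := by rw [hN]; rfl
    have hQne : Qm b n ≠ 0 := by
      rw [Qm]
      exact Finset.prod_ne_zero_iff.mpr (fun i _ => hbne (i+1))
    -- the 2x2 singular system
    have hdet0 : (Atil b n + Qm b n) * (Btil b (n+1) + Qm b (n+1))
        + Btil b n * Atil b (n+1) = 0 := by
      rw [hAn, hAn1, hBn, hBn1, hQsucc, ← hQW]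
      have hZf : Pseq b 0 (N+3) + b 0 * Pseq b 1 (N+1) = 0 := by rw [← hZform]; exact hZ0'
      linear_combination ((Pseq b 0 (N+2))^2 * (Pseq b 1 (N+2))^2 * b 0) * h2
        + ((Pseq b 0 (N+3) * Pseq b 1 (N+1) + Pseq b 0 (N+2) * Pseq b 1 (N+2))
            * (Pseq b 0 (N+3) + b 0 * Pseq b 1 (N+1)) + (Pseq b 0 (N+3) * Pseq b 1 (N+1)
            + Pseq b 0 (N+2) * Pseq b 1 (N+2)) * 0) * hZf
    obtain ⟨α, β, hab, hrow1, hrow2⟩ : ∃ α β : F, ¬(α = 0 ∧ β = 0)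
        ∧ (Atil b n + Qm b n) * α + Btil b n * β = 0
        ∧ Atil b (n+1) * α + (Btil b (n+1) + Qm b (n+1)) * β = 0 := by
      by_cases h1 : (Atil b n + Qm b n) = 0 ∧ Btil b n = 0
      · by_cases hh2 : Atil b (n+1) = 0 ∧ (Btil b (n+1) + Qm b (n+1)) = 0
        · exact ⟨1, 0, by simp, by rw [h1.1, h1.2]; ring, by rw [hh2.1, hh2.2]; ring⟩
        · refine ⟨Btil b (n+1) + Qm b (n+1), Atil b (n+1), ?_,
            by rw [h1.1, h1.2]; ring,
            by linear_combination (Atil b (n+1) * (Btil b (n+1) + Qm b (n+1))) * h2⟩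
          intro hcon
          exact hh2 ⟨hcon.2, hcon.1⟩
      · refine ⟨Btil b n, Atil b n + Qm b n, ?_,
          by linear_combination (Btil b n * (Atil b n + Qm b n)) * h2, ?_⟩
        · intro hcon
          exact h1 ⟨hcon.2, hcon.1⟩
        · linear_combination hdet0
    -- the recursively defined sequence
    set X : ℕ → F × F := fun j =>
      Nat.rec (α, β) (fun i p => (p.2, (p.2 + b i * p.1) / b (i+1))) j with hXdef
    set x : ℕ → F := fun j => (X j).1 with hxdef
    have hx0 : x 0 = α := rfl
    have hx1 : x 1 = β := rfl
    have hrec : ∀ j, x (j+2) = (x (j+1) + b j * x j) / b (j+1) := fun j => rfl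
    have hR : ∀ j, b (j+1) * x (j+2) = x (j+1) + b j * x j := by
      intro j
      rw [hrec j, mul_comm, div_mul_cancel₀ _ (hbne (j+1))]
    have e1 := Xlemma b h2 x hR n
    have e2 := Xlemma b h2 x hR (n+1)
    rw [hx0, hx1] at e1 e2
    have hxn : x n = α := by
      have hQeq : Qm b n * x n = Qm b n * α := by
        rw [e1]
        linear_combination hrow1 - (Qm b n * α) * h2
      exact mul_left_cancel₀ hQne hQeq
    have hxn1 : x (n+1) = β := by
      have hQn1 : Qm b (n+1) ≠ 0 := by
        rw [hQsucc]; exact mul_ne_zero hQne (hbne 0)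
      have hQeq : Qm b (n+1) * x (n+1) = Qm b (n+1) * β := by
        rw [e2]
        linear_combination hrow2 - (Qm b (n+1) * β) * h2
      exact mul_left_cancel₀ hQn1 hQeq
    have hper : ∀ j, x (j + n) = x j := by
      intro j
      induction j using Stmt16.two_step with
      | h0 => rw [Nat.zero_add, hxn, hx0]
      | h1 => rw [Nat.add_comm 1 n, hxn1, hx1]
      | hs j ih1 ih2 =>
        rw [show j+2+n = (j+n)+2 from by ring, hrec (j+n), hrec j,
          show j+n+1 = (j+1)+n from by ring, ih2, ih1, hbper j, hbper (j+1)]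
    -- candidate kernel elements
    set wfun : F → F := fun θ => ∑ j ∈ Finset.range n, (θ * x (2*n - j))^(2^(j*l))
      with hwdef
    have hb2n1 : b (2*n+1) = b 1 := by
      rw [show 2*n+1 = (1+n)+n from by ring, hbper, hbper]
    have hb2n : b (2*n) = b 0 := by
      rw [show 2*n = (0+n)+n from by ring, hbper, hbper]
    have hbn : b n = b 0 := by
      rw [show n = 0+n from by omega, hbper]
    have hx2n1 : x (2*n+1) = x 1 := by
      rw [show 2*n+1 = (1+n)+n from by ring, hper, hper]
    have hx2n : x (2*n) = x 0 := by
      rw [show 2*n = (0+n)+n from by ring, hper, hper]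
    have hLw : ∀ θ, b 1 * (wfun θ)^(2^(2*l)) + (wfun θ)^(2^l) + b 0 * (wfun θ) = 0 := by
      intro θ
      have hwf : wfun θ = ∑ j ∈ Finset.range n, (θ * x (2*n - j))^(2^(j*l)) := rfl
      have hS2 : b 1 * (wfun θ)^(2^(2*l))
          = ∑ i ∈ Finset.range n, (θ * (b (2*n - i) * x (2*n + 1 - i)))^(2^((i+1)*l)) := by
        rw [hwf, sum_pow (2*l), Finset.mul_sum]
        have hstep : ∑ j ∈ Finset.range n, b 1 * ((θ * x (2*n - j))^(2^(j*l)))^(2^(2*l))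
            = ∑ j ∈ Finset.range n, b 1 * (θ * x (2*n - j))^(2^((j+2)*l)) :=
          Finset.sum_congr rfl (fun j hj => by
            rw [tw, show j*l + 2*l = (j+2)*l from by ring])
        rw [hstep]
        rw [← sum_shift n (fun i => (θ * (b (2*n - i) * x (2*n + 1 - i)))^(2^((i+1)*l))) ?_]
        · refine Finset.sum_congr rfl (fun j hj => ?_)
          have hjn : j < n := Finset.mem_range.mp hj
          show b 1 * (θ * x (2*n - j)) ^ 2 ^ ((j+2) * l)
            = (θ * (b (2*n - (j+1)) * x (2*n + 1 - (j+1)))) ^ 2 ^ ((j+1+1) * l)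
          rw [show 2*n + 1 - (j+1) = 2*n - j from by omega,
            show (j+1+1 : ℕ) = j+2 from by ring]
          simp only [mul_pow]
          rw [show (b (2*n - (j+1)))^(2^((j+2)*l)) = b 1 from by
              rw [hbpow (2*n - (j+1)) (j+2), show 2*n - (j+1) + (j+2) = 2*n+1 from by omega,
                hb2n1]]
          ring
        · show (θ * (b (2*n - n) * x (2*n + 1 - n))) ^ 2 ^ ((n+1) * l)
            = (θ * (b (2*n - 0) * x (2*n + 1 - 0))) ^ 2 ^ ((0+1) * l)
          rw [show 2*n - n = n from by omega, show 2*n + 1 - n = n+1 from by omega,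
            show 2*n - 0 = 2*n from by omega, show 2*n + 1 - 0 = 2*n+1 from by omega,
            show ((0:ℕ)+1)*l = 1*l from by ring,
            show ((n:ℕ)+1)*l = 1*l + n*l from by ring, ← tw, hxnl,
            hb2n, hbn, hx2n1, hxn1, hx1]
      have hS1 : (wfun θ)^(2^l)
          = ∑ i ∈ Finset.range n, (θ * x (2*n - i))^(2^((i+1)*l)) := by
        rw [hwf, sum_pow l]
        exact Finset.sum_congr rfl (fun j hj => by
          rw [tw, show j*l + l = (j+1)*l from by ring])
      have hS0 : b 0 * (wfun θ)
          = ∑ i ∈ Finset.range n, (θ * (b (2*n - 1 - i) * x (2*n - 1 - i)))^(2^((i+1)*l)) := by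
        rw [hwf, Finset.mul_sum]
        rw [← sum_shift n (fun i => b 0 * (θ * x (2*n - i))^(2^(i*l))) ?_]
        · refine Finset.sum_congr rfl (fun j hj => ?_)
          have hjn : j < n := Finset.mem_range.mp hj
          show b 0 * (θ * x (2*n - (j+1))) ^ 2 ^ ((j+1) * l)
            = (θ * (b (2*n - 1 - j) * x (2*n - 1 - j))) ^ 2 ^ ((j+1) * l)
          rw [show 2*n - 1 - j = 2*n - (j+1) from by omega]
          simp only [mul_pow]
          rw [show (b (2*n - (j+1)))^(2^((j+1)*l)) = b 0 from by
              rw [hbpow (2*n - (j+1)) (j+1), show 2*n - (j+1) + (j+1) = 2*n from by omega,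
                hb2n]]
          ring
        · show b 0 * (θ * x (2*n - n)) ^ 2 ^ (n * l)
            = b 0 * (θ * x (2*n - 0)) ^ 2 ^ (0 * l)
          rw [show 2*n - n = n from by omega, show 2*n - 0 = 2*n from by omega,
            hxnl, show (0:ℕ) * l = 0 from by ring, pow_zero, pow_one, hx2n, hxn, hx0]
      rw [hS2, hS1, hS0, ← Finset.sum_add_distrib, ← Finset.sum_add_distrib]
      apply Finset.sum_eq_zero
      intro i hi
      have hin : i < n := Finset.mem_range.mp hi
      rw [← addpow ((i+1)*l), ← addpow ((i+1)*l)]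
      have hRi := hR (2*n - 1 - i)
      rw [show 2*n - 1 - i + 1 = 2*n - i from by omega,
        show 2*n - 1 - i + 2 = 2*n + 1 - i from by omega] at hRi
      have hz : θ * (b (2*n - i) * x (2*n + 1 - i)) + θ * x (2*n - i)
          + θ * (b (2*n - 1 - i) * x (2*n - 1 - i)) = 0 := by
        linear_combination θ * hRi + (θ * (x (2*n - i) + b (2*n - 1 - i) * x (2*n - 1 - i))) * h2
      rw [hz, zero_pow (Nat.two_pow_pos _).ne']
    have hθ : ∃ θ, wfun θ ≠ 0 := by
      by_contra hcon
      push_neg at hcon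
      -- divisibility helper: 2^k - 1 ∣ 2^m - 1 → k ∣ m
      have hdvd_pow : ∀ m : ℕ, (2^k - 1) ∣ (2^m - 1) → k ∣ m := by
        intro m hm
        obtain ⟨q, r, hrlt, hm'⟩ : ∃ q r, r < k ∧ m = k*q + r :=
          ⟨m/k, m%k, Nat.mod_lt _ hk0, (Nat.div_add_mod m k).symm⟩
        subst hm'
        have h1 : (2^k - 1) ∣ (2^(k*q) - 1) := by
          have := Nat.sub_dvd_pow_sub_pow (2^k) 1 q
          rwa [one_pow, ← pow_mul] at this
        have hmeq : (2:ℕ)^r * 2^(k*q) = 2^(k*q+r) := by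
          rw [← pow_add]
          congr 1
          omega
        have hp1 : (0:ℕ) < 2^(k*q) := Nat.two_pow_pos _
        have hp2 : (0:ℕ) < 2^r := Nat.two_pow_pos _
        have hle3 : (2:ℕ)^r ≤ 2^(k*q+r) := Nat.pow_le_pow_right (by norm_num) (by omega)
        have hms : (2:ℕ)^r * (2^(k*q) - 1) = 2^(k*q+r) - 2^r := by
          rw [Nat.mul_sub, hmeq, Nat.mul_one]
        have hsplit : (2:ℕ)^(k*q+r) - 1 = 2^r * (2^(k*q) - 1) + (2^r - 1) := by
          rw [hms]
          omega
        have h3 : (2^k - 1) ∣ (2^r - 1) := by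
          have hd1 : (2^k - 1) ∣ 2^r * (2^(k*q) - 1) := Dvd.dvd.mul_left h1 _
          have hd2 := Nat.dvd_sub hm hd1
          rwa [hsplit, Nat.add_sub_cancel_left] at hd2
        have h4 : (2:ℕ)^r - 1 < 2^k - 1 := by
          have := Nat.pow_lt_pow_right (a := 2) (by norm_num) hrlt
          omega
        have h5 := Nat.eq_zero_of_dvd_of_lt h3 h4
        have h7 : r = 0 := by
          by_contra h7
          have : (2:ℕ)^1 ≤ 2^r := Nat.pow_le_pow_right (by norm_num) (by omega)
          simp only [pow_one] at this
          omega
        exact ⟨q, by omega⟩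
      -- injectivity of the Frobenius power maps
      have haux : ∀ i j : ℕ, i ≤ j → j < n →
          (powMonoidHom (2^(i*l)) : F →* F) = powMonoidHom (2^(j*l)) → i = j := by
        intro i j hij hjn heq
        obtain ⟨g0, hg0⟩ := IsCyclic.exists_generator (α := Fˣ)
        have horder : orderOf g0 = 2^k - 1 := by
          rw [orderOf_eq_card_of_forall_mem_zpowers hg0, Nat.card_eq_fintype_card,
            Fintype.card_units, hF]
        have hval : ((g0 : F))^((2:ℕ)^(i*l)) = ((g0 : F))^((2:ℕ)^(j*l)) := by
          have := DFunLike.congr_fun heq (g0 : F)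
          simpa [powMonoidHom_apply] using this
        have hu : g0^((2:ℕ)^(i*l)) = g0^((2:ℕ)^(j*l)) :=
          Units.ext (by rw [Units.val_pow_eq_pow_val, Units.val_pow_eq_pow_val]; exact hval)
        have hmodeq : (2:ℕ)^(i*l) ≡ 2^(j*l) [MOD 2^k - 1] := by
          rw [← horder]
          exact pow_eq_pow_iff_modEq.mp hu
        have hle : (2:ℕ)^(i*l) ≤ 2^(j*l) :=
          Nat.pow_le_pow_right (by norm_num) (Nat.mul_le_mul_right l hij)
        have hdvd : (2^k - 1) ∣ (2^(j*l) - 2^(i*l)) := (Nat.modEq_iff_dvd' hle).mp hmodeq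
        have hfact : (2:ℕ)^(j*l) - 2^(i*l) = (2^((j-i)*l) - 1) * 2^(i*l) := by
          rw [Nat.sub_mul, ← pow_add, Nat.one_mul,
            show (j-i)*l + i*l = j*l from by rw [← Nat.add_mul]; congr 1; omega]
        have hodd : ((2:ℕ)^k - 1) % 2 = 1 := by
          have hkk : (2:ℕ)^k = 2*2^(k-1) := by
            rw [← pow_succ']
            congr 1
            omega
          have := Nat.two_pow_pos (k-1)
          omega
        have hcop : Nat.Coprime (2^k - 1) ((2:ℕ)^(i*l)) := by
          apply Nat.Coprime.pow_right
          have hnd2 : ¬ (2 ∣ (2^k - 1)) := by omega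
          exact (Nat.Prime.coprime_iff_not_dvd Nat.prime_two |>.mpr hnd2).symm
        have hdvd2 : (2^k - 1) ∣ (2^((j-i)*l) - 1) :=
          Nat.Coprime.dvd_of_dvd_mul_right hcop (hfact ▸ hdvd)
        have hkdvd : k ∣ (j-i)*l := hdvd_pow _ hdvd2
        have hndvd : n ∣ (j-i)*l' := by
          have h9 : (j-i)*l = ((j-i)*l')*d := by rw [hll']; ring
          rw [h9, hk] at hkdvd
          exact (Nat.mul_dvd_mul_iff_right hd0).mp hkdvd
        have hnd : n ∣ (j - i) := Nat.Coprime.dvd_of_dvd_mul_right hco.symm hndvd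
        have := Nat.eq_zero_of_dvd_of_lt hnd
        rcases Nat.eq_zero_or_pos (j - i) with h0 | hpos
        · omega
        · exfalso
          have : n ≤ j - i := Nat.le_of_dvd hpos hnd
          omega
      have hinj : Function.Injective
          (fun j : Fin n => (powMonoidHom (2^((j:ℕ)*l)) : F →* F)) := by
        intro i j heq
        rcases le_total (i:ℕ) (j:ℕ) with h | h
        · exact Fin.ext (haux i j h j.isLt heq)
        · exact (Fin.ext (haux j i h i.isLt heq.symm)).symm
      have hli := (linearIndependent_monoidHom F F).comp _ hinj
      have hzero := Fintype.linearIndependent_iff.mp hli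
        (fun j : Fin n => (x (2*n - (j:ℕ)))^(2^((j:ℕ)*l)))
      have hsum0 : ∑ j : Fin n, (x (2*n - (j:ℕ)))^(2^((j:ℕ)*l)) •
          (((fun f : F →* F => ⇑f) ∘ fun j : Fin n =>
            (powMonoidHom (2^((j:ℕ)*l)) : F →* F)) j) = 0 := by
        funext θ
        rw [Finset.sum_apply]
        show (∑ j : Fin n,
          (x (2*n - (j:ℕ)))^(2^((j:ℕ)*l)) * θ^(2^((j:ℕ)*l))) = (0 : F)
        rw [Fin.sum_univ_eq_sum_range (fun j => (x (2*n - j))^(2^(j*l)) * θ^(2^(j*l))) n]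
        have := hcon θ
        rw [hwdef] at this
        rw [← this]
        exact Finset.sum_congr rfl (fun j hj => by rw [mul_pow]; ring)
      have hallz := hzero hsum0
      have hxz : ∀ j : ℕ, j < n → x (2*n - j) = 0 := by
        intro j hj
        have := hallz ⟨j, hj⟩
        exact pow_eq_zero_iff (Nat.two_pow_pos _).ne' |>.mp this
      have hβ : β = 0 := by
        have := hxz (n-1) (by omega)
        rw [show 2*n - (n-1) = n+1 from by omega, hxn1] at this
        exact this
      have hα : α = 0 := by
        have hx2 : x (n+2) = 0 := by
          have := hxz (n-2) (by omega)
          rwa [show 2*n - (n-2) = n+2 from by omega] at this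
        have hx1' : x (n+1) = 0 := by rw [hxn1, hβ]
        have hRn := hR n
        rw [hx2, hx1', mul_zero, zero_add] at hRn
        have : x n = 0 := by
          rcases mul_eq_zero.mp hRn.symm with h | h
          · exact absurd h (hbne n)
          · exact h
        rwa [hxn] at this
      exact hab ⟨hα, hβ⟩
    obtain ⟨θ, hθ'⟩ := hθ
    exact ⟨wfun θ, hθ', hLw θ⟩
  -- ===== assembly =====
  refine ⟨⟨?_, ?_⟩, fun hZ => ⟨hsol hZ, htr hZ⟩⟩
  · -- ∃! → Z ≠ 0
    intro hex hZ0
    obtain ⟨w, hw0, hLw⟩ := hkernz hZ0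
    obtain ⟨v, hv, huniq⟩ := hex
    have hv' : a ^ (2 ^ l) * (v+w) ^ (2 ^ (2 * l)) + (v+w) ^ (2 ^ l) + a * (v+w) + c = 0 := by
      rw [addpow (2*l) v w, addpow l v w]
      have hb1 : b 1 = a ^ (2^l) := by simp [hbdef, one_mul]
      rw [hb1, hb0] at hLw
      linear_combination hv + hLw
    have := huniq (v+w) hv'
    have hvv := huniq v hv
    rw [hvv] at this
    exact hw0 (by linear_combination this)
  · -- Z ≠ 0 → ∃!
    intro hZ
    refine ⟨c * Cseq l a n / Zseq l n a, hsol hZ, ?_⟩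
    intro y hy
    have hv0 := hsol hZ
    set v0 := c * Cseq l a n / Zseq l n a
    have hdiff : b 1 * (y+v0)^(2^(2*l)) + (y+v0)^(2^l) + b 0 * (y+v0) = 0 := by
      have hb1 : b 1 = a ^ (2^l) := by simp [hbdef, one_mul]
      rw [addpow (2*l) y v0, addpow l y v0, hb1, hb0]
      linear_combination hy + hv0 - c * h2
    have := hker hZ (y + v0) hdiff
    linear_combination this - v0 * h2
end

section
/- Let l < k with gcd(l,k) = d, k = n d, n > 1, c in GF(2^d), and a in GF(2^k). Then the affine polynomial F_a(x) = a^{2^l} x^{2^{2l}} + x^{2^l} + a x + c has at least one zero in GF(2^k). -/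
open Finset Module

namespace Stmt17

variable {F : Type*} [Field F] [Fintype F]

lemma char2 {k : ℕ} (hk : 0 < k) (hF : Fintype.card F = 2 ^ k) : CharP F 2 := by
  haveI : CharP F (ringChar F) := ringChar.charP F
  obtain ⟨m, hm, hcard⟩ := FiniteField.card F (ringChar F)
  have hdvd : ringChar F ∣ 2 ^ k := by
    rw [← hF, hcard]
    exact dvd_pow_self _ (by exact_mod_cast m.ne_zero)
  have h2 : ringChar F = 2 :=
    (Nat.prime_dvd_prime_iff_eq hm Nat.prime_two).mp (hm.dvd_of_dvd_pow hdvd)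
  rw [← h2]; exact ringChar.charP F

variable [CharP F 2]

lemma pp (x : F) (m j : ℕ) : (x ^ 2 ^ m) ^ 2 ^ j = x ^ 2 ^ (m + j) := by
  rw [← pow_mul, ← pow_add]

lemma addpow (x y : F) (m : ℕ) : (x + y) ^ 2 ^ m = x ^ 2 ^ m + y ^ 2 ^ m :=
  add_pow_char_pow ..

lemma sumpow {ι : Type*} (s : Finset ι) (f : ι → F) (m : ℕ) :
    (∑ i ∈ s, f i) ^ 2 ^ m = ∑ i ∈ s, f i ^ 2 ^ m :=
  sum_pow_char_pow ..

section red
variable {k : ℕ} (hF : Fintype.card F = 2 ^ k)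
include hF

lemma red (x : F) (m : ℕ) : x ^ 2 ^ (m + k) = x ^ 2 ^ m := by
  have h1 : x ^ (2 : ℕ) ^ k = x := by rw [← hF]; exact FiniteField.pow_card x
  rw [add_comm, ← pp, h1]

lemma redmod (x : F) (m : ℕ) : x ^ 2 ^ m = x ^ 2 ^ (m % k) := by
  have haux : ∀ q r, x ^ 2 ^ (r + k * q) = x ^ 2 ^ r := by
    intro q
    induction q with
    | zero => simp
    | succ q ih =>
      intro r
      have : r + k * (q + 1) = (r + k * q) + k := by ring
      rw [this, red hF, ih]
  conv_lhs => rw [← Nat.mod_add_div m k]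
  exact haux _ _

lemma congrpow (x : F) {m m' : ℕ} (h : m % k = m' % k) : x ^ 2 ^ m = x ^ 2 ^ m' := by
  rw [redmod hF, h, ← redmod hF]

end red

/-- absolute trace (as an element of `F`) -/
def Tr (k : ℕ) (x : F) : F := ∑ i ∈ range k, x ^ 2 ^ i

lemma Tr_add (k : ℕ) (x y : F) : Tr k (x + y) = Tr k x + Tr k y := by
  simp [Tr, addpow, Finset.sum_add_distrib]

lemma Tr_zero (k : ℕ) : Tr k (0 : F) = 0 := by
  have : ∀ i : ℕ, (0:F) ^ 2 ^ i = 0 := fun i => zero_pow (by positivity)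
  simp [Tr, this]

section tr
variable {k : ℕ} (hF : Fintype.card F = 2 ^ k)
include hF

lemma Tr_frob (x : F) : Tr k (x ^ 2) = Tr k x := by
  have hshift : ∀ i : ℕ, (x ^ 2) ^ 2 ^ i = x ^ 2 ^ (i + 1) := by
    intro i; rw [← pow_mul, ← pow_succ']
  have h1 : ∑ i ∈ range k, x ^ 2 ^ (i + 1) + x ^ 2 ^ 0 = ∑ i ∈ range (k + 1), x ^ 2 ^ i :=
    (Finset.sum_range_succ' (fun i => x ^ 2 ^ i) k).symm
  have h2 : ∑ i ∈ range (k + 1), x ^ 2 ^ i = ∑ i ∈ range k, x ^ 2 ^ i + x ^ 2 ^ k :=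
    Finset.sum_range_succ _ k
  have h3 : x ^ (2:ℕ) ^ k = x ^ 2 ^ 0 := by
    rw [pow_zero, pow_one, ← hF]; exact FiniteField.pow_card x
  have := h1.trans h2
  rw [h3] at this
  have := add_right_cancel this
  simpa [Tr, hshift] using this

lemma Tr_frobpow (x : F) (m : ℕ) : Tr k (x ^ 2 ^ m) = Tr k x := by
  induction m with
  | zero => simp
  | succ m ih =>
    have : x ^ 2 ^ (m + 1) = (x ^ 2 ^ m) ^ 2 := by rw [← pow_mul, pow_succ]
    rw [this, Tr_frob hF, ih]

lemma Tr_sq (x : F) : Tr k x ^ 2 = Tr k x := by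
  have h1 : (Tr k x) ^ 2 = Tr k (x ^ 2) := by
    have h2 : (2:ℕ) = 2 ^ 1 := rfl
    rw [h2, Tr, sumpow]
    unfold Tr
    refine Finset.sum_congr rfl fun i _ => ?_
    rw [← pow_mul, ← pow_mul, pow_one, Nat.mul_comm]
  rw [h1, Tr_frob hF]

lemma Tr_mem (x : F) : Tr k x = 0 ∨ Tr k x = 1 := by
  have h := Tr_sq hF x
  have h2 : Tr k x * (Tr k x - 1) = 0 := by ring_nf; linear_combination h
  rcases mul_eq_zero.mp h2 with h3 | h3
  · exact Or.inl h3
  · exact Or.inr (by linear_combination h3)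

lemma Tr_exists (hk : 0 < k) : ∃ x : F, Tr k x ≠ 0 := by
  by_contra hcon
  push_neg at hcon
  set p : Polynomial F := ∑ i ∈ range k, Polynomial.X ^ 2 ^ i with hp
  have hev : ∀ x : F, p.eval x = 0 := by
    intro x
    rw [hp]
    simpa [Polynomial.eval_finset_sum, Tr] using hcon x
  have hdeg : p.natDegree < Fintype.card F := by
    rw [hF]
    refine lt_of_le_of_lt (Polynomial.natDegree_sum_le _ _) ?_
    rw [Finset.fold_max_lt]
    constructor
    · exact Nat.pow_pos two_pos
    · intro i hi
      simp only [Function.comp_apply, Polynomial.natDegree_X_pow]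
      exact Nat.pow_lt_pow_right one_lt_two (Finset.mem_range.mp hi)
  have hp0 : p = 0 :=
    Polynomial.eq_zero_of_natDegree_lt_card_of_eval_eq_zero p (f := fun x : F => x)
      Function.injective_id hev hdeg
  have hc1 : p.coeff 1 = 1 := by
    rw [hp, Polynomial.finset_sum_coeff]
    have : ∀ i ∈ range k, (Polynomial.X ^ 2 ^ i : Polynomial F).coeff 1
        = if i = 0 then 1 else 0 := by
      intro i _
      rw [Polynomial.coeff_X_pow]
      congr 1
      simp only [eq_iff_iff]
      constructor
      · intro h
        by_contra hne
        have : 2 ^ 1 ≤ 2 ^ i := Nat.pow_le_pow_right (by norm_num) (Nat.one_le_iff_ne_zero.mpr hne)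
        omega
      · rintro rfl; rfl
    rw [Finset.sum_congr rfl this, Finset.sum_ite_eq' (range k) 0]
    simp [Finset.mem_range.mpr hk]
  rw [hp0] at hc1
  simpa using hc1

end tr

section main
variable {k l d n : ℕ} (hF : Fintype.card F = 2 ^ k)
include hF

/-- Telescoping: a zero `θ` of the linear part has zero σ-sum. -/
lemma telescope (hdl : d ∣ l) (hk : k = n * d) (a θ : F)
    (hθ : a ^ 2 ^ l * θ ^ 2 ^ (2 * l) + θ ^ 2 ^ l + a * θ = 0) :
    ∑ i ∈ range n, θ ^ 2 ^ (l * i % k) = 0 := by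
  set y : ℕ → F := fun i => θ ^ 2 ^ (l * i % k) with hy
  set A : ℕ → F := fun i => a ^ 2 ^ (l * i % k) with hA
  have hkn : k ∣ l * n := by
    obtain ⟨e, he⟩ := hdl
    exact ⟨e, by rw [he, hk]; ring⟩
  have hmodper : ∀ i, l * (i + n) % k = l * i % k := by
    intro i
    have h1 : l * (i + n) = l * i + l * n := by ring
    obtain ⟨t, ht⟩ := hkn
    rw [h1, ht, Nat.add_mul_mod_self_left]
  have hyper : ∀ i, y (i + n) = y i := fun i => by simp only [hy, hmodper]
  have hAper : ∀ i, A (i + n) = A i := fun i => by simp only [hA, hmodper]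
  have hcong : ∀ j i : ℕ, (j * l + l * i % k) % k = l * (i + j) % k := by
    intro j i
    have h1 : j * l + l * i % k ≡ j * l + l * i [MOD k] :=
      Nat.ModEq.add_left _ (Nat.mod_modEq _ _)
    have h2 : j * l + l * i = l * (i + j) := by ring
    rw [← h2]
    exact h1
  have R : ∀ i, A (i + 1) * y (i + 2) + y (i + 1) + A i * y i = 0 := by
    intro i
    have h0 := congrArg (fun z => z ^ 2 ^ (l * i % k)) hθ
    rw [addpow, addpow, mul_pow, pp, pp, pp, zero_pow (by positivity)] at h0
    have e1 : a ^ 2 ^ (l + l * i % k) = A i.succ := by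
      apply congrpow hF
      rw [Nat.mod_mod_of_dvd _ dvd_rfl]
      have h5 := hcong 1 i
      rwa [one_mul] at h5
    have e2 : θ ^ 2 ^ (2 * l + l * i % k) = y (i + 2) := by
      apply congrpow hF
      rw [Nat.mod_mod_of_dvd _ dvd_rfl]
      exact hcong 2 i
    have e3 : θ ^ 2 ^ (l + l * i % k) = y (i + 1) := by
      apply congrpow hF
      rw [Nat.mod_mod_of_dvd _ dvd_rfl]
      have h5 := hcong 1 i
      rwa [one_mul] at h5
    rw [e1, e2, e3] at h0
    have h6 : (a * θ) ^ 2 ^ (l * i % k) = A i * y i := by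
      simp only [hA, hy, mul_pow]
    rw [h6] at h0
    exact h0
  set q : ℕ → F := fun i => A i * y i * y (i + 1) with hq
  have step : ∀ i, q (i + 1) = q i + y (i + 1) ^ 2 := by
    intro i
    have hRi := R i
    have h1 : A (i + 1) * y (i + 2) = y (i + 1) + A i * y i := by
      have h2 : A (i + 1) * y (i + 2) + (y (i + 1) + A i * y i) = 0 := by
        rw [← add_assoc]; exact hRi
      have h3 : A (i + 1) * y (i + 2) + ((y (i + 1) + A i * y i) + (y (i + 1) + A i * y i))
          = y (i + 1) + A i * y i := by
        rw [← add_assoc, h2, zero_add]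
      rw [CharTwo.add_self_eq_zero, add_zero] at h3
      exact h3
    calc q (i + 1) = y (i + 1) * (A (i + 1) * y (i + 2)) := by rw [hq]; ring
      _ = y (i + 1) * (y (i + 1) + A i * y i) := by rw [h1]
      _ = q i + y (i + 1) ^ 2 := by rw [hq]; ring
  have accum : ∀ j, q j = q 0 + ∑ i ∈ range j, y (i + 1) ^ 2 := by
    intro j
    induction j with
    | zero => simp
    | succ j ih => rw [step j, ih, Finset.sum_range_succ]; ring
  have hqn : q n = q 0 := by
    show A n * y n * y (n + 1) = A 0 * y 0 * y (0 + 1)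
    have h1 : A n = A 0 := by simpa using hAper 0
    have h2 : y n = y 0 := by simpa using hyper 0
    have h3 : y (n + 1) = y 1 := by
      have := hyper 1
      rwa [Nat.add_comm] at this
    rw [h1, h2, h3]
  have hsum0 : ∑ i ∈ range n, y (i + 1) ^ 2 = 0 := by
    have := accum n
    rw [hqn] at this
    exact (left_eq_add.mp this)
  have hshift : ∑ i ∈ range n, y (i + 1) = ∑ i ∈ range n, y i := by
    have h1 : ∑ i ∈ range n, y (i + 1) + y 0 = ∑ i ∈ range (n + 1), y i :=
      (Finset.sum_range_succ' y n).symm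
    have h2 : ∑ i ∈ range (n + 1), y i = ∑ i ∈ range n, y i + y n :=
      Finset.sum_range_succ y n
    have h3 : y n = y 0 := by simpa using hyper 0
    have h4 := h1.trans h2
    rw [h3] at h4
    exact add_right_cancel h4
  have hsq : (∑ i ∈ range n, y i) ^ 2 = 0 := by
    have h5 : (∑ i ∈ range n, y (i + 1)) ^ 2 = ∑ i ∈ range n, y (i + 1) ^ 2 := by
      have h6 : (2:ℕ) = 2 ^ 1 := rfl
      rw [h6, sumpow]
    rw [← hshift, h5, hsum0]
  exact pow_eq_zero_iff (by norm_num) |>.mp hsq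

omit hF in
lemma reindex (hd : Nat.gcd l k = d) (hk : k = n * d) (hk0 : 0 < k) (θ : F) :
    ∑ i ∈ range n, θ ^ 2 ^ (l * i % k) = ∑ j ∈ range n, θ ^ 2 ^ (d * j) := by
  have hd0 : 0 < d := by
    rcases Nat.eq_zero_or_pos d with h | h
    · subst h; omega
    · exact h
  have hn0 : 0 < n := by
    rcases Nat.eq_zero_or_pos n with h | h
    · subst h; omega
    · exact h
  obtain ⟨e, he⟩ : d ∣ l := hd ▸ Nat.gcd_dvd_left l k
  have hcop : Nat.gcd e n = 1 := by
    have h1 : Nat.gcd (d * e) (d * n) = d * Nat.gcd e n := Nat.gcd_mul_left d e n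
    rw [← he, mul_comm d n, ← hk, hd] at h1
    have h2 : d * 1 = d * Nat.gcd e n := by rw [mul_one, ← h1]
    exact (Nat.eq_of_mul_eq_mul_left hd0 h2).symm
  have hexp : ∀ i, l * i % k = d * (e * i % n) := by
    intro i
    rw [he, hk, mul_comm n d]
    rw [mul_assoc]
    exact Nat.mul_mod_mul_left d (e * i) n
  have hmaps : ∀ i ∈ range n, e * i % n ∈ range n :=
    fun i _ => Finset.mem_range.mpr (Nat.mod_lt _ hn0)
  have hinj : Set.InjOn (fun i => e * i % n) (range n : Set ℕ) := by
    intro i₁ h₁ i₂ h₂ hmod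
    simp only [Finset.coe_range, Set.mem_Iio] at h₁ h₂
    have h3 : i₁ % n = i₂ % n :=
      Nat.ModEq.cancel_left_of_coprime (by rwa [Nat.gcd_comm] at hcop) hmod
    rwa [Nat.mod_eq_of_lt h₁, Nat.mod_eq_of_lt h₂] at h3
  have hsurj : Set.SurjOn (fun i => e * i % n) (range n : Set ℕ) (range n : Set ℕ) := by
    intro b hb
    simp only [Finset.coe_range, Set.mem_Iio] at hb
    have := Finset.surj_on_of_inj_on_of_card_le (s := range n) (t := range n)
      (fun i _ => e * i % n) (fun i hi => hmaps i hi)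
      (fun i₁ i₂ h₁ h₂ hmod => hinj (by simpa using h₁) (by simpa using h₂) hmod)
      le_rfl b (Finset.mem_range.mpr hb)
    obtain ⟨a, ha, hab⟩ := this
    exact ⟨a, by simpa using ha, hab.symm⟩
  refine Finset.sum_nbij (fun i => e * i % n) hmaps hinj hsurj ?_
  intro i _
  rw [hexp]

omit hF in
lemma subpow {c : F} (hc : c ^ 2 ^ d = c) : ∀ q : ℕ, c ^ 2 ^ (d * q) = c := by
  intro q
  induction q with
  | zero => simp
  | succ q ih =>
    have h1 : d * (q + 1) = d * q + d := by ring
    rw [h1, ← pp, ih, hc]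

lemma trace_kill (hk : k = n * d) (hd0 : 0 < d) {c : F} (hc : c ^ 2 ^ d = c) (u : F)
    (hu : ∑ q ∈ range n, u ^ 2 ^ (d * q) = 0) : Tr k (c * u) = 0 := by
  have hsplit : Tr k (c * u)
      = ∑ p ∈ range d ×ˢ range n, (c * u) ^ 2 ^ (d * p.2 + p.1) := by
    rw [Tr]
    refine Finset.sum_nbij' (fun i => (i % d, i / d)) (fun p => d * p.2 + p.1)
      ?_ ?_ ?_ ?_ ?_
    · intro i hi
      simp only [Finset.mem_product, Finset.mem_range] at *
      constructor
      · exact Nat.mod_lt _ hd0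
      · have h2 : i < n * d := hk ▸ hi
        exact Nat.div_lt_of_lt_mul (by rwa [mul_comm] at h2)
    · intro p hp
      simp only [Finset.mem_product, Finset.mem_range] at hp ⊢
      have := hp.1; have := hp.2
      calc d * p.2 + p.1 < d * p.2 + d := by omega
        _ = d * (p.2 + 1) := by ring
        _ ≤ d * n := Nat.mul_le_mul_left d (by omega)
        _ = k := by rw [hk, mul_comm]
    · intro i _
      simp only
      exact Nat.div_add_mod i d
    · intro p hp
      simp only [Finset.mem_product, Finset.mem_range] at hp
      have h1 : (d * p.2 + p.1) % d = p.1 := by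
        rw [Nat.add_mod, Nat.mul_mod_right]
        simpa using Nat.mod_eq_of_lt hp.1
      have h2 : (d * p.2 + p.1) / d = p.2 := by
        rw [Nat.mul_add_div hd0, Nat.div_eq_of_lt hp.1, add_zero]
      simp [h1, h2]
    · intro i _
      simp only
      rw [Nat.div_add_mod i d]
  rw [hsplit, Finset.sum_product]
  refine Finset.sum_eq_zero fun r _ => ?_
  have hterm : ∀ q ∈ range n, (c * u) ^ 2 ^ (d * q + r) = (c * u ^ 2 ^ (d * q)) ^ 2 ^ r := by
    intro q _
    rw [← pp, mul_pow, subpow hc]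
  rw [Finset.sum_congr rfl hterm, ← sumpow, ← Finset.mul_sum, hu, mul_zero]
  exact zero_pow (by positivity)

lemma adjoint (a x θ : F) :
    Tr k ((a ^ 2 ^ l * x ^ 2 ^ (2 * l) + x ^ 2 ^ l + a * x) * θ ^ 2 ^ l)
      = Tr k (x ^ 2 ^ l * (a ^ 2 ^ l * θ ^ 2 ^ (2 * l) + θ ^ 2 ^ l + a * θ)) := by
  rw [add_mul, add_mul, mul_add, mul_add, Tr_add, Tr_add, Tr_add, Tr_add]
  have e1 : Tr k (a ^ 2 ^ l * x ^ 2 ^ (2 * l) * θ ^ 2 ^ l) = Tr k (a * x ^ 2 ^ l * θ) := by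
    have h1 : a ^ 2 ^ l * x ^ 2 ^ (2 * l) * θ ^ 2 ^ l = (a * x ^ 2 ^ l * θ) ^ 2 ^ l := by
      rw [mul_pow, mul_pow, pp, two_mul]
    rw [h1, Tr_frobpow hF]
  have e2 : Tr k (a * x * θ ^ 2 ^ l) = Tr k (x ^ 2 ^ l * (a ^ 2 ^ l * θ ^ 2 ^ (2 * l))) := by
    have h1 : x ^ 2 ^ l * (a ^ 2 ^ l * θ ^ 2 ^ (2 * l)) = (a * x * θ ^ 2 ^ l) ^ 2 ^ l := by
      rw [mul_pow, mul_pow, pp, two_mul]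
      ring
    rw [h1, Tr_frobpow hF]
  have e3 : x ^ 2 ^ l * (a * θ) = a * x ^ 2 ^ l * θ := by ring
  rw [e1, e2, e3]
  ring

end main

end Stmt17


open Stmt17 in
/-- the affine polynomial
`F_a(x) = a^(2^l) x^(2^(2l)) + x^(2^l) + a x + c` with `c ∈ GF(2^d)` always has
at least one zero in `GF(2^k)`. -/
theorem stmt_17 (k l d n : ℕ) (hlk : l < k) (hd : Nat.gcd l k = d) (hk : k = n * d)
    (hn : 1 < n)
    (F : Type*) [Field F] [Fintype F] (hF : Fintype.card F = 2 ^ k)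
    (a : F) (c : F) (hc : c ^ (2 ^ d) = c) :
    ∃ v : F, a ^ (2 ^ l) * v ^ (2 ^ (2 * l)) + v ^ (2 ^ l) + a * v + c = 0 := by
  classical
  have hk0 : 0 < k := lt_of_le_of_lt (Nat.zero_le l) hlk
  haveI hchar : CharP F 2 := Stmt17.char2 hk0 hF
  have hd0 : 0 < d := by
    rcases Nat.eq_zero_or_pos d with h | h
    · subst h; omega
    · exact h
  have hdl : d ∣ l := hd ▸ Nat.gcd_dvd_left l k
  letI : Module (ZMod 2) F := AddCommGroup.zmodModule (n := 2) (fun x => by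
    rw [two_smul]; exact CharTwo.add_self_eq_zero x)
  haveI : Module.Finite (ZMod 2) F := Module.Finite.of_finite
  -- the additive maps
  let σhom : F →+ F :=
    { toFun := fun x => x ^ 2 ^ l
      map_zero' := zero_pow (by positivity)
      map_add' := fun x y => addpow x y l }
  let Lhom : F →+ F :=
    { toFun := fun x => a ^ 2 ^ l * x ^ 2 ^ (2 * l) + x ^ 2 ^ l + a * x
      map_zero' := by
        show a ^ 2 ^ l * (0:F) ^ 2 ^ (2 * l) + (0:F) ^ 2 ^ l + a * 0 = 0
        rw [zero_pow (by positivity), zero_pow (by positivity)]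
        ring
      map_add' := by
        intro x y
        show a ^ 2 ^ l * (x + y) ^ 2 ^ (2 * l) + (x + y) ^ 2 ^ l + a * (x + y)
          = (a ^ 2 ^ l * x ^ 2 ^ (2 * l) + x ^ 2 ^ l + a * x)
            + (a ^ 2 ^ l * y ^ 2 ^ (2 * l) + y ^ 2 ^ l + a * y)
        rw [addpow, addpow]
        ring }
  let Tr2hom : F →+ ZMod 2 :=
    { toFun := fun x => if Tr k x = 0 then 0 else 1
      map_zero' := by simp [Tr_zero]
      map_add' := by
        intro x y
        show (if Tr k (x + y) = 0 then (0:ZMod 2) else 1)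
          = (if Tr k x = 0 then (0:ZMod 2) else 1) + (if Tr k y = 0 then (0:ZMod 2) else 1)
        rcases Tr_mem hF x with hx | hx <;> rcases Tr_mem hF y with hy | hy <;>
          rw [Tr_add, hx, hy] <;>
          simp [one_ne_zero, CharTwo.add_self_eq_zero (1 : F)] <;>
          decide }
  let L : F →ₗ[ZMod 2] F := Lhom.toZModLinearMap 2
  let σL : F →ₗ[ZMod 2] F := σhom.toZModLinearMap 2
  let Tr2 : F →ₗ[ZMod 2] ZMod 2 := Tr2hom.toZModLinearMap 2
  have hTr2 : ∀ x : F, Tr2 x = 0 ↔ Tr k x = 0 := by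
    intro x
    show (if Tr k x = 0 then (0 : ZMod 2) else 1) = 0 ↔ _
    by_cases h : Tr k x = 0
    · simp [h]
    · simp [h, (by decide : (1 : ZMod 2) ≠ 0)]
  have hσinj : Function.Injective σL := by
    intro x y hxy
    have h1 : (x - y) ^ 2 ^ l = 0 := by
      rw [sub_pow_char_pow]
      exact sub_eq_zero.mpr hxy
    have hne : (2:ℕ) ^ l ≠ 0 := by positivity
    exact sub_eq_zero.mp (pow_eq_zero_iff hne |>.mp h1)
  let mulL : F → F →ₗ[ZMod 2] F := fun y => (AddMonoidHom.mulLeft y).toZModLinearMap 2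
  let Φhom : F →+ Module.Dual (ZMod 2) F :=
    { toFun := fun y => Tr2 ∘ₗ mulL y
      map_zero' := by
        apply LinearMap.ext
        intro x
        show Tr2 ((0 : F) * x) = 0
        rw [zero_mul, map_zero]
      map_add' := by
        intro y₁ y₂
        apply LinearMap.ext
        intro x
        show Tr2 ((y₁ + y₂) * x) = Tr2 (y₁ * x) + Tr2 (y₂ * x)
        rw [add_mul, map_add] }
  let Φ : F →ₗ[ZMod 2] Module.Dual (ZMod 2) F := Φhom.toZModLinearMap 2
  have hΦapp : ∀ y x : F, Φ y x = Tr2 (y * x) := fun y x => rfl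
  have hΦinj : Function.Injective Φ := by
    rw [injective_iff_map_eq_zero]
    intro y hy
    by_contra hy0
    obtain ⟨x₀, hx₀⟩ := Tr_exists hF hk0
    have h1 : Φ y (y⁻¹ * x₀) = 0 := by rw [hy]; rfl
    rw [hΦapp, ← mul_assoc, mul_inv_cancel₀ hy0, one_mul] at h1
    exact hx₀ ((hTr2 x₀).mp h1)
  have hΦbij : Function.Bijective Φ := by
    refine ⟨hΦinj, ?_⟩
    rw [← LinearMap.range_eq_top]
    apply Submodule.eq_top_of_finrank_eq
    rw [LinearMap.finrank_range_of_inj hΦinj, Subspace.dual_finrank_eq]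
  set S : Submodule (ZMod 2) F := (LinearMap.ker L).map σL with hS
  set Wsub : Submodule (ZMod 2) F := S.dualAnnihilator.comap Φ with hW
  -- range L ≤ Wsub via the adjoint identity
  have hrange_le : LinearMap.range L ≤ Wsub := by
    rintro _ ⟨x, rfl⟩
    rw [hW, Submodule.mem_comap, Submodule.mem_dualAnnihilator]
    rintro w hwS
    rw [hS] at hwS
    obtain ⟨θ, hθker, rfl⟩ := Submodule.mem_map.mp hwS
    have hθ0 : a ^ 2 ^ l * θ ^ 2 ^ (2 * l) + θ ^ 2 ^ l + a * θ = 0 := hθker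
    rw [hΦapp]
    rw [hTr2]
    show Tr k ((a ^ 2 ^ l * x ^ 2 ^ (2 * l) + x ^ 2 ^ l + a * x) * θ ^ 2 ^ l) = 0
    rw [adjoint hF, hθ0, mul_zero, Tr_zero]
  -- dimension count
  have hfrk : Module.finrank (ZMod 2) (LinearMap.range L) = Module.finrank (ZMod 2) Wsub := by
    let e : F ≃ₗ[ZMod 2] Module.Dual (ZMod 2) F := LinearEquiv.ofBijective Φ hΦbij
    have h1 : Module.finrank (ZMod 2) Wsub
        = Module.finrank (ZMod 2) S.dualAnnihilator := by
      have heq : Wsub = Submodule.comap (e : F →ₗ[ZMod 2] Module.Dual (ZMod 2) F)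
          S.dualAnnihilator := by rw [hW]; rfl
      rw [heq, Submodule.comap_equiv_eq_map_symm]
      exact LinearEquiv.finrank_map_eq e.symm _
    have h2 : Module.finrank (ZMod 2) (F ⧸ S) + Module.finrank (ZMod 2) S
        = Module.finrank (ZMod 2) F := Submodule.finrank_quotient_add_finrank S
    have h3 : Module.finrank (ZMod 2) S.dualAnnihilator
        = Module.finrank (ZMod 2) (F ⧸ S) :=
      (LinearEquiv.finrank_eq (Subspace.quotEquivAnnihilator S)).symm
    have h4 : Module.finrank (ZMod 2) S = Module.finrank (ZMod 2) (LinearMap.ker L) :=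
      (LinearEquiv.finrank_eq (Submodule.equivMapOfInjective σL hσinj _)).symm
    have h5 : Module.finrank (ZMod 2) (LinearMap.range L)
        + Module.finrank (ZMod 2) (LinearMap.ker L) = Module.finrank (ZMod 2) F :=
      LinearMap.finrank_range_add_finrank_ker L
    omega
  have hEq : LinearMap.range L = Wsub := Submodule.eq_of_le_of_finrank_eq hrange_le hfrk
  -- c lies in Wsub
  have hcW : c ∈ Wsub := by
    rw [hW, Submodule.mem_comap, Submodule.mem_dualAnnihilator]
    rintro w hwS
    rw [hS] at hwS
    obtain ⟨θ, hθker, rfl⟩ := Submodule.mem_map.mp hwS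
    have hθ0 : a ^ 2 ^ l * θ ^ 2 ^ (2 * l) + θ ^ 2 ^ l + a * θ = 0 := hθker
    rw [hΦapp, hTr2]
    show Tr k (c * θ ^ 2 ^ l) = 0
    apply trace_kill hF hk hd0 hc
    have h6 : ∀ q ∈ Finset.range n, (θ ^ 2 ^ l) ^ 2 ^ (d * q) = (θ ^ 2 ^ (d * q)) ^ 2 ^ l := by
      intro q _
      rw [pp, pp, Nat.add_comm]
    rw [Finset.sum_congr rfl h6, ← sumpow, ← reindex hd hk hk0 θ,
      telescope hF hdl hk a θ hθ0]
    exact zero_pow (by positivity)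
  have hcR : c ∈ LinearMap.range L := hEq.symm ▸ hcW
  obtain ⟨v, hv⟩ := hcR
  refine ⟨v, ?_⟩
  have hv' : a ^ 2 ^ l * v ^ 2 ^ (2 * l) + v ^ 2 ^ l + a * v = c := hv
  rw [hv']
  exact CharTwo.add_self_eq_zero c
end

section
/- Let k, l be positive integers with l < k, d = gcd(l,k), and let r in GF(2^{2k})* satisfy r^{2^k+1} = 1. If (k+l)/d is odd, or if (k+l)/d is even and r^{(2^k+1)/(2^d+1)} = 1, then r is a (2^{k+l}-1)-th power in GF(2^{2k}); if (k+l)/d is even and r^{(2^k+1)/(2^d+1)} != 1, then r is not a (2^{k+l}-1)-th power in GF(2^{2k}). -/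
/-- gcd of `2^m - 1` and `2^n - 1` is `2^(gcd m n) - 1`. -/
lemma gcd_two_pow_sub_one (m n : ℕ) :
    Nat.gcd (2 ^ m - 1) (2 ^ n - 1) = 2 ^ (Nat.gcd m n) - 1 := by
  induction m using Nat.strong_induction_on generalizing n with
  | _ m ih =>
    match m with
    | 0 => simp
    | (m + 1) =>
      set a := m + 1 with ha
      have ha0 : 0 < a := Nat.succ_pos m
      have h1 : (1:ℕ) ≤ 2 ^ (n % a) := Nat.one_le_two_pow
      have h1n : (1:ℕ) ≤ 2 ^ n := Nat.one_le_two_pow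
      have h2 : 2 ^ (n % a) ≤ 2 ^ n := Nat.pow_le_pow_right (by norm_num) (Nat.mod_le n a)
      have hdvd : 2 ^ a - 1 ∣ (2 ^ n - 1) - (2 ^ (n % a) - 1) := by
        have hn : (2:ℕ) ^ n = 2 ^ (a * (n / a)) * 2 ^ (n % a) := by
          rw [← pow_add, Nat.div_add_mod n a]
        have heq : (2 ^ n - 1) - (2 ^ (n % a) - 1) = (2 ^ (a * (n / a)) - 1) * 2 ^ (n % a) := by
          rw [tsub_mul, one_mul, ← hn]
          omega
        rw [heq]
        have : (2:ℕ) ^ a - 1 ∣ 2 ^ (a * (n / a)) - 1 := by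
          simpa [one_pow, ← pow_mul] using Nat.sub_dvd_pow_sub_pow ((2:ℕ) ^ a) 1 (n / a)
        exact this.mul_right _
      have hmod : (2 ^ (n % a) - 1) ≡ (2 ^ n - 1) [MOD 2 ^ a - 1] :=
        (Nat.modEq_iff_dvd' (by omega)).mpr hdvd
      calc Nat.gcd (2 ^ a - 1) (2 ^ n - 1)
          = Nat.gcd ((2 ^ n - 1) % (2 ^ a - 1)) (2 ^ a - 1) := Nat.gcd_rec _ _
        _ = Nat.gcd ((2 ^ (n % a) - 1) % (2 ^ a - 1)) (2 ^ a - 1) := by rw [← hmod]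
        _ = Nat.gcd (2 ^ a - 1) (2 ^ (n % a) - 1) := (Nat.gcd_rec _ _).symm
        _ = Nat.gcd (2 ^ (n % a) - 1) (2 ^ a - 1) := Nat.gcd_comm _ _
        _ = 2 ^ (Nat.gcd (n % a) a) - 1 := ih (n % a) (Nat.mod_lt n ha0) a
        _ = 2 ^ (Nat.gcd a n) - 1 := by rw [Nat.gcd_rec a n]

/-- In a finite field, a nonzero `r` is an `m`-th power iff
`r ^ ((q-1) / gcd m (q-1)) = 1`. -/
lemma field_pow_iff {K : Type*} [Field K] [Fintype K] (m : ℕ) (hm : 0 < m) (r : K)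
    (hr : r ≠ 0) :
    (∃ s : K, s ^ m = r) ↔
      r ^ ((Fintype.card K - 1) / Nat.gcd m (Fintype.card K - 1)) = 1 := by
  classical
  have hcard : Fintype.card Kˣ = Fintype.card K - 1 := Fintype.card_units K
  lift r to Kˣ using Ne.isUnit hr
  set N := Fintype.card K - 1 with hNdef
  set G := Nat.gcd m N with hG
  have hGm : G ∣ m := Nat.gcd_dvd_left _ _
  have hGN : G ∣ N := Nat.gcd_dvd_right _ _
  have hN0 : 0 < N := hcard ▸ Fintype.card_pos
  have hG0 : 0 < G := Nat.gcd_pos_of_pos_left _ hm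
  constructor
  · rintro ⟨s, hs⟩
    have hs0 : s ≠ 0 := by
      intro h0
      rw [h0, zero_pow hm.ne'] at hs
      exact r.ne_zero hs.symm
    lift s to Kˣ using Ne.isUnit hs0
    have hs' : s ^ m = r := Units.ext (by rw [Units.val_pow_eq_pow_val]; exact hs)
    obtain ⟨m', hm'⟩ := hGm
    obtain ⟨N', hN'⟩ := hGN
    have hdivN : N / G = N' := by rw [hN', Nat.mul_div_cancel_left _ hG0]
    have : r ^ (N / G) = 1 := by
      rw [← hs', ← pow_mul, hdivN, hm', show G * m' * N' = m' * (G * N') by ring, ← hN',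
        ← hcard, pow_mul, pow_card_eq_one]
    rw [← Units.val_pow_eq_pow_val, this, Units.val_one]
  · intro h
    have h' : r ^ (N / G) = 1 := Units.ext (by rw [Units.val_pow_eq_pow_val, Units.val_one]; exact h)
    obtain ⟨g, hg⟩ := IsCyclic.exists_generator (α := Kˣ)
    have hog : orderOf g = N := by
      rw [orderOf_eq_card_of_forall_mem_zpowers hg, Nat.card_eq_fintype_card, hcard]
    obtain ⟨t, ht⟩ := mem_powers_iff_mem_zpowers.mpr (hg r)
    rw [← ht, ← pow_mul] at h'
    have hdvd : N ∣ t * (N / G) := by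
      have hh := orderOf_dvd_of_pow_eq_one h'
      rwa [hog] at hh
    obtain ⟨N', hN'⟩ := hGN
    have hN'0 : 0 < N' := by
      rcases Nat.eq_zero_or_pos N' with h0 | h0
      · rw [h0, mul_zero] at hN'; omega
      · exact h0
    have hdivN : N / G = N' := by rw [hN', Nat.mul_div_cancel_left _ hG0]
    rw [hdivN, hN'] at hdvd
    have hGt : G ∣ t := (Nat.mul_dvd_mul_iff_right hN'0).mp hdvd
    obtain ⟨u, rfl⟩ := hGt
    have hgN : g ^ (N : ℤ) = 1 := by
      rw [zpow_natCast, ← hcard]; exact pow_card_eq_one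
    have key : (g ^ Nat.gcdA m N) ^ m = g ^ (G : ℤ) := by
      have hb : (G : ℤ) = m * Nat.gcdA m N + N * Nat.gcdB m N := Nat.gcd_eq_gcd_ab m N
      rw [← zpow_natCast (g ^ Nat.gcdA m N) m, ← zpow_mul, hb, zpow_add,
        zpow_mul g (N : ℤ), hgN, one_zpow, mul_one, mul_comm (Nat.gcdA m N) (m : ℤ)]
    have hfinal : ((g ^ Nat.gcdA m N) ^ u) ^ m = r := by
      rw [← ht]
      calc ((g ^ Nat.gcdA m N) ^ u) ^ m = ((g ^ Nat.gcdA m N) ^ m) ^ u := by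
            rw [← pow_mul, ← pow_mul, mul_comm]
        _ = (g ^ (G : ℤ)) ^ u := by rw [key]
        _ = g ^ (G * u) := by
            rw [← zpow_natCast (g ^ (G : ℤ)) u, ← zpow_mul, ← zpow_natCast g (G * u)]
            norm_cast
    exact ⟨((g ^ Nat.gcdA m N) ^ u : Kˣ), by rw [← Units.val_pow_eq_pow_val, hfinal]⟩

/-- for `r ∈ GF(2^(2k))*` with `r^(2^k+1) = 1`, `r` is a
`(2^(k+l)-1)`-th power in `GF(2^(2k))` except precisely when `(k+l)/d` is even
and `r^((2^k+1)/(2^d+1)) ≠ 1`, where `d = gcd(l,k)`. -/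
theorem stmt_18 (k l d : ℕ) (hk : 0 < k) (hl : 0 < l) (hlk : l < k) (hd : Nat.gcd l k = d)
    (E : Type*) [Field E] [Fintype E] (hE : Fintype.card E = 2 ^ (2 * k))
    (r : E) (hr0 : r ≠ 0) (hr : r ^ (2 ^ k + 1) = 1) :
    ((Odd ((k + l) / d) ∨ (Even ((k + l) / d) ∧ r ^ ((2 ^ k + 1) / (2 ^ d + 1)) = 1)) →
      ∃ s : E, s ^ (2 ^ (k + l) - 1) = r) ∧
    ((Even ((k + l) / d) ∧ r ^ ((2 ^ k + 1) / (2 ^ d + 1)) ≠ 1) →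
      ¬∃ s : E, s ^ (2 ^ (k + l) - 1) = r) := by
  subst hd
  set d := Nat.gcd l k with hddef
  have hd0 : 0 < d := Nat.gcd_pos_of_pos_left _ hl
  have hdk : d ∣ k := Nat.gcd_dvd_right l k
  have hdl : d ∣ l := Nat.gcd_dvd_left l k
  obtain ⟨k', hk'⟩ := hdk
  obtain ⟨l', hl'⟩ := hdl
  have hk'0 : 0 < k' := by
    rcases Nat.eq_zero_or_pos k' with h0 | h0
    · rw [h0, mul_zero] at hk'; omega
    · exact h0
  have hquot : (k + l) / d = k' + l' := by
    rw [hk', hl', ← Nat.mul_add, Nat.mul_div_cancel_left _ hd0]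
  have hcop : Nat.Coprime l' k' := by
    have h := Nat.coprime_div_gcd_div_gcd (m := l) (n := k) hd0
    have h1 : l / Nat.gcd l k = l' := by rw [← hddef, hl', Nat.mul_div_cancel_left _ hd0]
    have h2 : k / Nat.gcd l k = k' := by rw [← hddef, hk', Nat.mul_div_cancel_left _ hd0]
    rwa [h1, h2] at h
  -- basic positivity
  have h1d : (1:ℕ) ≤ 2 ^ d := Nat.one_le_two_pow
  have h1k : (1:ℕ) ≤ 2 ^ k := Nat.one_le_two_pow
  have h12d : (1:ℕ) < 2 ^ d := Nat.one_lt_two_pow_iff.mpr hd0.ne'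
  have h12k : (1:ℕ) < 2 ^ k := Nat.one_lt_two_pow_iff.mpr hk.ne'
  have hm0 : 0 < 2 ^ (k + l) - 1 := by
    have : (1:ℕ) < 2 ^ (k + l) := Nat.one_lt_two_pow_iff.mpr (by omega)
    omega
  -- factorization of 2^(2k) - 1
  have h2k : (2:ℕ) ^ (2 * k) - 1 = (2 ^ k - 1) * (2 ^ k + 1) := by
    have hx : (2:ℕ) ^ (2 * k) = 2 ^ k * 2 ^ k := by rw [two_mul, pow_add]
    have h1kk : (1:ℕ) ≤ 2 ^ k * 2 ^ k := Nat.one_le_iff_ne_zero.mpr (by positivity)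
    rw [hx]
    zify [h1k, h1kk]
    ring
  have h2d : (2:ℕ) ^ (2 * d) - 1 = (2 ^ d - 1) * (2 ^ d + 1) := by
    have hx : (2:ℕ) ^ (2 * d) = 2 ^ d * 2 ^ d := by rw [two_mul, pow_add]
    have h1dd : (1:ℕ) ≤ 2 ^ d * 2 ^ d := Nat.one_le_iff_ne_zero.mpr (by positivity)
    rw [hx]
    zify [h1d, h1dd]
    ring
  have hdvdA : (2:ℕ) ^ d - 1 ∣ 2 ^ k - 1 := by
    have := Nat.sub_dvd_pow_sub_pow ((2:ℕ) ^ d) 1 k'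
    simpa [one_pow, ← pow_mul, ← hk'] using this
  obtain ⟨A, hA⟩ := hdvdA
  -- the main criterion
  set e := Nat.gcd (k + l) (2 * k) with hedef
  have hiff : (∃ s : E, s ^ (2 ^ (k + l) - 1) = r) ↔
      r ^ ((2 ^ (2 * k) - 1) / (2 ^ e - 1)) = 1 := by
    rw [field_pow_iff _ hm0 r hr0, hE, gcd_two_pow_sub_one]
  -- gcd structure : d ∣ e and e ∣ 2d
  have hde : d ∣ e := Nat.dvd_gcd (by rw [hk', hl']; exact ⟨k' + l', by ring⟩)
    (by rw [hk']; exact ⟨2 * k', by ring⟩)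
  have he2d : e ∣ 2 * d := by
    have h1 : e ∣ Nat.gcd (2 * (k + l)) (2 * k) :=
      Nat.dvd_gcd ((Nat.gcd_dvd_left _ _).trans ⟨2, by ring⟩) (Nat.gcd_dvd_right _ _)
    rwa [Nat.gcd_mul_left, show Nat.gcd (k + l) k = d by
      rw [add_comm k l, Nat.gcd_add_self_left]] at h1
  have he0 : 0 < e := Nat.gcd_pos_of_pos_left _ (by omega)
  refine ⟨?_, ?_⟩
  · rintro (hodd | ⟨heven, hr1⟩)
    · -- odd case : e = d
      have he : e = d := by
        obtain ⟨c, hc⟩ := hde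
        have hc2 : c ∣ 2 := by
          obtain ⟨w, hw⟩ := he2d
          have : d * (c * w) = d * 2 := by rw [← mul_assoc, ← hc, ← hw]; ring
          have hcw : c * w = 2 := by
            exact Nat.eq_of_mul_eq_mul_left hd0 this
          exact ⟨w, hcw.symm⟩
        rcases (Nat.dvd_prime Nat.prime_two).mp hc2 with h1 | h1
        · rw [hc, h1, mul_one]
        · exfalso
          rw [h1] at hc
          have : 2 * d ∣ k + l := by rw [show 2 * d = d * 2 by ring, ← hc]; exact Nat.gcd_dvd_left _ _
          obtain ⟨w, hw⟩ := this
          have : (k + l) / d = 2 * w := by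
            rw [hw, show 2 * d * w = d * (2 * w) by ring, Nat.mul_div_cancel_left _ hd0]
          rw [this] at hodd
          exact (Nat.not_odd_iff_even.mpr ⟨w, by ring⟩) hodd
      have hNdiv : (2 ^ (2 * k) - 1) / (2 ^ d - 1) = A * (2 ^ k + 1) := by
        rw [h2k, hA, mul_assoc, Nat.mul_div_cancel_left _ (by omega : 0 < (2:ℕ) ^ d - 1)]
      rw [hiff, he, hNdiv, mul_comm, pow_mul, hr, one_pow]
    · -- even case with r^B = 1
      have hk'odd : Odd k' := by
        rcases Nat.even_or_odd k' with hk2 | hk2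
        · exfalso
          rw [hquot] at heven
          have hl2 : Even l' := (Nat.even_add.mp heven).mp hk2
          have : 2 ∣ Nat.gcd l' k' :=
            Nat.dvd_gcd hl2.two_dvd hk2.two_dvd
          rw [hcop] at this
          omega
        · exact hk2
      have he : e = 2 * d := by
        refine Nat.dvd_antisymm he2d (Nat.dvd_gcd ?_ ⟨k', by rw [hk']; ring⟩)
        rw [hquot] at heven
        obtain ⟨w, hw⟩ := heven
        exact ⟨w, by rw [hk', hl', ← Nat.mul_add, hw]; ring⟩
      have hdvdB : (2:ℕ) ^ d + 1 ∣ 2 ^ k + 1 := by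
        have := hk'odd.nat_add_dvd_pow_add_pow ((2:ℕ) ^ d) 1
        simpa [one_pow, ← pow_mul, ← hk'] using this
      obtain ⟨B, hB⟩ := hdvdB
      have hBval : (2 ^ k + 1) / (2 ^ d + 1) = B := by
        rw [hB, Nat.mul_div_cancel_left _ (by omega : 0 < (2:ℕ) ^ d + 1)]
      have hNdiv : (2 ^ (2 * k) - 1) / (2 ^ (2 * d) - 1) = A * B := by
        rw [h2k, hA, hB, h2d,
          show (2 ^ d - 1) * A * ((2 ^ d + 1) * B) = (2 ^ d - 1) * (2 ^ d + 1) * (A * B) by ring,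
          Nat.mul_div_cancel_left _ (Nat.mul_pos (by omega) (by omega))]
      rw [hBval] at hr1
      rw [hiff, he, hNdiv, mul_comm, pow_mul, hr1, one_pow]
  · rintro ⟨heven, hner⟩ hex
    -- same structure as even case
    have hk'odd : Odd k' := by
      rcases Nat.even_or_odd k' with hk2 | hk2
      · exfalso
        rw [hquot] at heven
        have hl2 : Even l' := (Nat.even_add.mp heven).mp hk2
        have : 2 ∣ Nat.gcd l' k' :=
          Nat.dvd_gcd hl2.two_dvd hk2.two_dvd
        rw [hcop] at this
        omega
      · exact hk2
    have he : e = 2 * d := by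
      refine Nat.dvd_antisymm he2d (Nat.dvd_gcd ?_ ⟨k', by rw [hk']; ring⟩)
      rw [hquot] at heven
      obtain ⟨w, hw⟩ := heven
      exact ⟨w, by rw [hk', hl', ← Nat.mul_add, hw]; ring⟩
    have hdvdB : (2:ℕ) ^ d + 1 ∣ 2 ^ k + 1 := by
      have := hk'odd.nat_add_dvd_pow_add_pow ((2:ℕ) ^ d) 1
      simpa [one_pow, ← pow_mul, ← hk'] using this
    obtain ⟨B, hB⟩ := hdvdB
    have hBval : (2 ^ k + 1) / (2 ^ d + 1) = B := by
      rw [hB, Nat.mul_div_cancel_left _ (by omega : 0 < (2:ℕ) ^ d + 1)]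
    have hNdiv : (2 ^ (2 * k) - 1) / (2 ^ (2 * d) - 1) = A * B := by
      rw [h2k, hA, hB, h2d,
        show (2 ^ d - 1) * A * ((2 ^ d + 1) * B) = (2 ^ d - 1) * (2 ^ d + 1) * (A * B) by ring,
        Nat.mul_div_cancel_left _ (Nat.mul_pos (by omega) (by omega))]
    have hAB : r ^ (A * B) = 1 := by
      have := hiff.mp hex
      rwa [he, hNdiv] at this
    -- coprimality of A with 2^k + 1
    have hcop2 : Nat.Coprime (2 ^ k - 1) (2 ^ k + 1) := by
      have hodd : Odd ((2:ℕ) ^ k - 1) := by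
        have : Even ((2:ℕ) ^ k) := Nat.even_pow.mpr ⟨even_two, hk.ne'⟩
        exact Nat.Even.sub_odd h1k this odd_one
      have : Nat.gcd (2 ^ k - 1) (2 ^ k + 1) = Nat.gcd (2 ^ k - 1) 2 := by
        rw [show (2:ℕ) ^ k + 1 = 2 + (2 ^ k - 1) by omega, Nat.gcd_add_self_right]
      rw [Nat.Coprime, this]
      exact Nat.coprime_two_right.mpr hodd
    have hcopA : Nat.Coprime A (2 ^ k + 1) :=
      Nat.Coprime.coprime_dvd_left (Dvd.intro_left _ hA.symm) hcop2
    have hord1 : orderOf r ∣ 2 ^ k + 1 := orderOf_dvd_of_pow_eq_one hr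
    have hord2 : orderOf r ∣ A * B := orderOf_dvd_of_pow_eq_one hAB
    have hcopo : Nat.Coprime (orderOf r) A :=
      ((hcopA.symm).coprime_dvd_left hord1)
    have hordB : orderOf r ∣ B := hcopo.dvd_of_dvd_mul_left hord2
    have : r ^ B = 1 := orderOf_dvd_iff_pow_eq_one.mp hordB
    rw [hBval] at hner
    exact hner this
end

section
/- Let l < k with gcd(l,k) = 1, a in GF(2^k)*, and let q(x) = (sum_{i=1}^{l'} x^{2^{il}} + epsilon)/x^{2^l+1} with epsilon = l'+1 mod 2 and l' = l^{-1} mod k, which is a permutation of GF(2^k)*. Let V in GF(2^k)* be the unique solution of a x^{2^l+1} = sum_{i=1}^{l'} x^{2^{il}} + l' + 1. Then a^{2^l} V^{2^{2l}} + V^{2^l} + a V + 1 = 0. -/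
/-- if `V` is the (unique) nonzero solution of
`a x^(2^l+1) = ∑_{i=1}^{l'} x^(2^(il)) + l' + 1`, then
`a^(2^l) V^(2^(2l)) + V^(2^l) + a V + 1 = 0`. -/
theorem stmt_19 (k l l' : ℕ) (hk : 0 < k) (hlk : l < k) (hgcd : Nat.gcd l k = 1)
    (hl' : l * l' ≡ 1 [MOD k])
    (F : Type*) [Field F] [Fintype F] (hF : Fintype.card F = 2 ^ k)
    (a : F) (ha : a ≠ 0) (V : F) (hV0 : V ≠ 0)
    (hV : a * V ^ (2 ^ l + 1) =
      (∑ i ∈ Finset.Icc 1 l', V ^ (2 ^ (i * l))) + ((l' : F) + 1)) :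
    a ^ (2 ^ l) * V ^ (2 ^ (2 * l)) + V ^ (2 ^ l) + a * V + 1 = 0 := by
  -- characteristic 2
  haveI : CharP F (ringChar F) := ringChar.charP F
  have hprime : (ringChar F).Prime := CharP.char_is_prime F _
  have hcard0 : ((2 ^ k : ℕ) : F) = 0 := by
    rw [← hF]; exact FiniteField.cast_card_eq_zero F
  have hdvd : ringChar F ∣ 2 ^ k := (CharP.cast_eq_zero_iff F _ _).mp hcard0
  have hchar2 : ringChar F = 2 :=
    (Nat.prime_dvd_prime_iff_eq hprime Nat.prime_two).mp (hprime.dvd_of_dvd_pow hdvd)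
  haveI hC2 : CharP F 2 := hchar2 ▸ ringChar.charP F
  haveI : Fact (Nat.Prime 2) := ⟨Nat.prime_two⟩
  have h2 : (2 : F) = 0 := by exact_mod_cast CharP.cast_eq_zero F 2
  -- period lemma
  have hper : ∀ (x : F) (t m : ℕ), x ^ (2 ^ (t * k + m)) = x ^ (2 ^ m) := by
    intro x t m
    induction t with
    | zero => simp
    | succ t ih =>
      have : (t + 1) * k + m = k + (t * k + m) := by ring
      rw [this, pow_add, pow_mul, ← hF, FiniteField.pow_card, ih]
  rcases Nat.lt_or_ge k 2 with hk2 | hk2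
  · -- k = 1 : F has two elements, a = V = 1
    interval_cases k
    have hone : ∀ x : F, x ≠ 0 → x = 1 := by
      intro x hx
      have := FiniteField.pow_card x
      rw [hF] at this
      simp only [pow_one, pow_two] at this
      -- x^2 = x
      have : x * (x - 1) = 0 := by ring_nf; linear_combination this
      rcases mul_eq_zero.mp this with h | h
      · exact absurd h hx
      · exact sub_eq_zero.mp h
    have haa := hone a ha
    have hVV := hone V hV0
    subst haa hVV
    simp only [one_pow, mul_one]
    linear_combination 2 * h2
  · -- main case
    have hl1 : 1 ≤ l := by
      rcases Nat.eq_zero_or_pos l with h | h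
      · subst h; simp [Nat.gcd] at hgcd; omega
      · exact h
    have hl'1 : 1 ≤ l' := by
      rcases Nat.eq_zero_or_pos l' with h | h
      · subst h
        have := hl'
        simp [Nat.ModEq] at this
        omega
      · exact h
    -- l * l' = c * k + 1
    obtain ⟨c, hc⟩ : ∃ c, l * l' = c * k + 1 := by
      have hle : 1 ≤ l * l' := Nat.one_le_iff_ne_zero.mpr (by positivity)
      obtain ⟨c, hcc⟩ := (Nat.modEq_iff_dvd' hle).mp hl'.symm
      exact ⟨c, by rw [mul_comm c k]; omega⟩
    -- apply Frobenius x ↦ x^(2^l) to hV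
    have hfrob := congrArg (iterateFrobenius F 2 l) hV
    simp only [map_mul, map_pow, map_add, map_sum, map_natCast, map_one,
      iterateFrobenius_def] at hfrob
    -- reindex the Frobenius of the sum
    have hsum : ∑ i ∈ Finset.Icc 1 l', ((V ^ 2 ^ l) ^ 2 ^ (i * l))
        = ∑ j ∈ Finset.Ioc 1 (l' + 1), V ^ 2 ^ (j * l) := by
      have hmap : Finset.Ioc 1 (l' + 1)
          = (Finset.Icc 1 l').map ⟨fun i => i + 1, add_left_injective 1⟩ := by
        ext j
        simp only [Finset.mem_Ioc, Finset.mem_map, Finset.mem_Icc,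
          Function.Embedding.coeFn_mk]
        constructor
        · intro hj; exact ⟨j - 1, by omega, by omega⟩
        · rintro ⟨i, hi, rfl⟩; omega
      rw [hmap, Finset.sum_map]
      refine Finset.sum_congr rfl fun i _ => ?_
      simp only [Function.Embedding.coeFn_mk]
      rw [← pow_mul, ← pow_add]
      congr 1
      ring
    have hsplit : ∑ j ∈ Finset.Ioc 1 (l' + 1), V ^ 2 ^ (j * l)
        = (∑ j ∈ Finset.Ioc 1 l', V ^ 2 ^ (j * l)) + V ^ 2 ^ ((l' + 1) * l) :=
      Finset.sum_Ioc_succ_top hl'1 _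
    have hS : (∑ i ∈ Finset.Icc 1 l', V ^ 2 ^ (i * l))
        = V ^ 2 ^ l + ∑ j ∈ Finset.Ioc 1 l', V ^ 2 ^ (j * l) := by
      rw [Finset.Icc_eq_cons_Ioc hl'1, Finset.sum_cons, one_mul]
    have he : (l' + 1) * l = c * k + (l + 1) := by
      rw [add_mul, one_mul, mul_comm l' l, hc]; ring
    have hlast : V ^ 2 ^ ((l' + 1) * l) = (V ^ 2 ^ l) ^ 2 := by
      rw [he, hper V c (l + 1), pow_succ, pow_mul]
    have hww : (V ^ 2 ^ l) ^ 2 ^ l = V ^ 2 ^ (2 * l) := by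
      rw [← pow_mul, ← pow_add, two_mul]
    have h1w : (V ^ 2 ^ l) ^ (2 ^ l + 1) = V ^ 2 ^ (2 * l) * V ^ 2 ^ l := by
      rw [pow_add, pow_one, hww]
    have hVw : V ^ (2 ^ l + 1) = V ^ 2 ^ l * V := by rw [pow_add, pow_one]
    rw [hsum, hsplit, hlast, h1w] at hfrob
    rw [hS, hVw] at hV
    have hwne : V ^ 2 ^ l ≠ 0 := pow_ne_zero _ hV0
    have hmain : (a ^ 2 ^ l * V ^ 2 ^ (2 * l) + V ^ 2 ^ l + a * V + 1) * V ^ 2 ^ l = 0 := by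
      linear_combination hfrob + hV +
        ((∑ j ∈ Finset.Ioc 1 l', V ^ 2 ^ (j * l)) + (V ^ 2 ^ l) ^ 2 + V ^ 2 ^ l
          + ((l' : F) + 1)) * h2
    rcases mul_eq_zero.mp hmain with h | h
    · exact h
    · exact absurd h hwne
end
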